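/- arXiv:2311.00944 — 4 statements merged into one kernel-verified Lean document; each statement's English description precedes it below -/
import Mathlib

section
/- Let p = 2l, 0 < η_x ≤ 1/(1000l), and η_y = η_x/256. Fix x, z ∈ ℝ^{d1} and y ∈ ℝ^{d2}, and set x' := x − η_x∇_x f̂(x,y,z) and y' := y + η_y∇_y f(x,y). Then f̂(x,y,z) − f̂(x',y',z) + 2(Ψ(y',z) − Ψ(y,z)) ≥ (η_x/8)‖∇_x f̂(x,y,z)‖² + (η_y/8)‖∇_y f(x,y)‖². -/
set_option maxHeartbeats 2000000


open Set Metric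
open scoped RealInnerProductSpace

noncomputable def gradx {d1 d2 : ℕ}
    (f : EuclideanSpace ℝ (Fin d1) → EuclideanSpace ℝ (Fin d2) → ℝ)
    (x : EuclideanSpace ℝ (Fin d1)) (y : EuclideanSpace ℝ (Fin d2)) :
    EuclideanSpace ℝ (Fin d1) :=
  gradient (fun x' => f x' y) x

noncomputable def grady {d1 d2 : ℕ}
    (f : EuclideanSpace ℝ (Fin d1) → EuclideanSpace ℝ (Fin d2) → ℝ)
    (x : EuclideanSpace ℝ (Fin d1)) (y : EuclideanSpace ℝ (Fin d2)) :
    EuclideanSpace ℝ (Fin d2) :=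
  gradient (fun y' => f x y') y

/-- `f` is differentiable and `l`-smooth: the gradient is `l`-Lipschitz with respect to the
Euclidean norm on the product space (stated in squared form). -/
def IsLSmooth {d1 d2 : ℕ} (l : ℝ)
    (f : EuclideanSpace ℝ (Fin d1) → EuclideanSpace ℝ (Fin d2) → ℝ) : Prop :=
  Differentiable ℝ (fun w : EuclideanSpace ℝ (Fin d1) × EuclideanSpace ℝ (Fin d2) => f w.1 w.2) ∧
  ∀ x₁ x₂ y₁ y₂,
    ‖gradx f x₁ y₁ - gradx f x₂ y₂‖ ^ 2 + ‖grady f x₁ y₁ - grady f x₂ y₂‖ ^ 2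
      ≤ l ^ 2 * (‖x₁ - x₂‖ ^ 2 + ‖y₁ - y₂‖ ^ 2)

/-- `f̂(x, y, z) = f(x, y) + (p/2)‖x − z‖²`. -/
noncomputable def fhat {d1 d2 : ℕ}
    (f : EuclideanSpace ℝ (Fin d1) → EuclideanSpace ℝ (Fin d2) → ℝ) (p : ℝ)
    (x : EuclideanSpace ℝ (Fin d1)) (y : EuclideanSpace ℝ (Fin d2))
    (z : EuclideanSpace ℝ (Fin d1)) : ℝ :=
  f x y + p / 2 * ‖x - z‖ ^ 2

/- ---------------- Auxiliary lemmas ---------------- -/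

lemma aux_le_of_sq_le_sq {c d : ℝ} (h : c ^ 2 ≤ d ^ 2) (hc : 0 ≤ c) (hd : 0 ≤ d) : c ≤ d := by
  nlinarith

lemma aux_taylor_est (φ D : ℝ → ℝ) (C : ℝ)
    (hφ : ∀ t, HasDerivAt φ (D t) t)
    (hD : ∀ t ∈ Icc (0:ℝ) 1, |D t - D 0| ≤ C * t) :
    |φ 1 - φ 0 - D 0| ≤ C / 2 := by
  have mono : ∀ (ψ : ℝ → ℝ) (ψ' : ℝ → ℝ), (∀ t, HasDerivAt ψ (ψ' t) t) →
      (∀ t ∈ Ioo (0:ℝ) 1, 0 ≤ ψ' t) → ψ 0 ≤ ψ 1 := by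
    intro ψ ψ' hψ hpos
    have h1 : MonotoneOn ψ (Icc (0:ℝ) 1) := by
      apply monotoneOn_of_deriv_nonneg (convex_Icc 0 1)
      · exact (fun t _ => (hψ t).differentiableAt.continuousAt.continuousWithinAt)
      · exact fun t _ => (hψ t).differentiableAt.differentiableWithinAt
      · intro t ht
        rw [interior_Icc] at ht
        rw [(hψ t).deriv]
        exact hpos t ht
    exact h1 (by norm_num) (by norm_num) (by norm_num)
  have hsq : ∀ t : ℝ, HasDerivAt (fun t : ℝ => C * t ^ 2 / 2) (C * t) t := by
    intro t
    have := ((hasDerivAt_pow 2 t).const_mul C).div_const 2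
    exact this.congr_deriv (by norm_num; ring)
  have hlin : ∀ t : ℝ, HasDerivAt (fun t : ℝ => t * D 0) (D 0) t := by
    intro t
    simpa using (hasDerivAt_id t).mul_const (D 0)
  have hub : φ 1 - φ 0 - D 0 ≤ C / 2 := by
    have := mono (fun t => C * t ^ 2 / 2 + t * D 0 - φ t) (fun t => C * t + D 0 - D t)
      (fun t => ((hsq t).add (hlin t)).sub (hφ t))
      (fun t ht => by
        have h2 := abs_le.mp (hD t ⟨le_of_lt ht.1, le_of_lt ht.2⟩)
        show 0 ≤ C * t + D 0 - D t
        linarith [h2.2])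
    simp at this; linarith
  have hlb : -(C / 2) ≤ φ 1 - φ 0 - D 0 := by
    have := mono (fun t => φ t + C * t ^ 2 / 2 - t * D 0) (fun t => D t + C * t - D 0)
      (fun t => ((hφ t).add (hsq t)).sub (hlin t))
      (fun t ht => by
        have h2 := abs_le.mp (hD t ⟨le_of_lt ht.1, le_of_lt ht.2⟩)
        show 0 ≤ D t + C * t - D 0
        linarith [h2.1])
    simp at this; linarith
  rw [abs_le]; constructor <;> linarith

section Aux

variable {d1 d2 : ℕ} {f : EuclideanSpace ℝ (Fin d1) → EuclideanSpace ℝ (Fin d2) → ℝ}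

lemma aux_diffx (hf : Differentiable ℝ (fun w : EuclideanSpace ℝ (Fin d1) × EuclideanSpace ℝ (Fin d2) => f w.1 w.2))
    (a : EuclideanSpace ℝ (Fin d1)) (b : EuclideanSpace ℝ (Fin d2)) :
    DifferentiableAt ℝ (fun t => f t b) a :=
  by have := (hf (a, b)).comp (f := fun t : EuclideanSpace ℝ (Fin d1) => (t, b)) a (by fun_prop); exact this

lemma aux_diffy (hf : Differentiable ℝ (fun w : EuclideanSpace ℝ (Fin d1) × EuclideanSpace ℝ (Fin d2) => f w.1 w.2))
    (a : EuclideanSpace ℝ (Fin d1)) (b : EuclideanSpace ℝ (Fin d2)) :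
    DifferentiableAt ℝ (fun t => f a t) b :=
  by have := (hf (a, b)).comp b ((differentiableAt_const a).prodMk differentiableAt_id); exact this

lemma aux_gradx_hasGradient (hf : Differentiable ℝ (fun w : EuclideanSpace ℝ (Fin d1) × EuclideanSpace ℝ (Fin d2) => f w.1 w.2))
    (a : EuclideanSpace ℝ (Fin d1)) (b : EuclideanSpace ℝ (Fin d2)) :
    HasGradientAt (fun t => f t b) (gradx f a b) a :=
  (aux_diffx hf a b).hasGradientAt

lemma aux_grady_hasGradient (hf : Differentiable ℝ (fun w : EuclideanSpace ℝ (Fin d1) × EuclideanSpace ℝ (Fin d2) => f w.1 w.2))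
    (a : EuclideanSpace ℝ (Fin d1)) (b : EuclideanSpace ℝ (Fin d2)) :
    HasGradientAt (fun t => f a t) (grady f a b) b :=
  (aux_diffy hf a b).hasGradientAt

lemma aux_fderiv_joint_apply (hf : Differentiable ℝ (fun w : EuclideanSpace ℝ (Fin d1) × EuclideanSpace ℝ (Fin d2) => f w.1 w.2))
    (a : EuclideanSpace ℝ (Fin d1)) (b : EuclideanSpace ℝ (Fin d2))
    (u : EuclideanSpace ℝ (Fin d1)) (v : EuclideanSpace ℝ (Fin d2)) :
    fderiv ℝ (fun w : EuclideanSpace ℝ (Fin d1) × EuclideanSpace ℝ (Fin d2) => f w.1 w.2) (a, b) (u, v)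
      = ⟪gradx f a b, u⟫ + ⟪grady f a b, v⟫ := by
  set L := fderiv ℝ (fun w : EuclideanSpace ℝ (Fin d1) × EuclideanSpace ℝ (Fin d2) => f w.1 w.2) (a, b) with hL
  have hLd : HasFDerivAt (fun w : EuclideanSpace ℝ (Fin d1) × EuclideanSpace ℝ (Fin d2) => f w.1 w.2) L (a, b) :=
    (hf (a, b)).hasFDerivAt
  have hx : HasFDerivAt (fun t => f t b) (L.comp (ContinuousLinearMap.inl ℝ _ _)) a := by
    have hc : HasFDerivAt (fun t : EuclideanSpace ℝ (Fin d1) => (t, b))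
        (ContinuousLinearMap.inl ℝ _ _) a :=
      (hasFDerivAt_id a).prodMk (hasFDerivAt_const b a)
    exact hLd.comp a hc
  have hy : HasFDerivAt (fun t => f a t) (L.comp (ContinuousLinearMap.inr ℝ _ _)) b := by
    have hc : HasFDerivAt (fun t : EuclideanSpace ℝ (Fin d2) => (a, t))
        (ContinuousLinearMap.inr ℝ _ _) b :=
      (hasFDerivAt_const a b).prodMk (hasFDerivAt_id b)
    exact hLd.comp b hc
  have ex : InnerProductSpace.toDual ℝ _ (gradx f a b) = L.comp (ContinuousLinearMap.inl ℝ _ _) :=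
    HasFDerivAt.unique ((aux_gradx_hasGradient hf a b).hasFDerivAt) hx
  have ey : InnerProductSpace.toDual ℝ _ (grady f a b) = L.comp (ContinuousLinearMap.inr ℝ _ _) :=
    HasFDerivAt.unique ((aux_grady_hasGradient hf a b).hasFDerivAt) hy
  have hxu : ⟪gradx f a b, u⟫ = L (u, 0) := by
    have := congrFun (congrArg DFunLike.coe ex) u
    simpa [InnerProductSpace.toDual_apply_apply] using this
  have hyv : ⟪grady f a b, v⟫ = L (0, v) := by
    have := congrFun (congrArg DFunLike.coe ey) v
    simpa [InnerProductSpace.toDual_apply_apply] using this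
  have : (u, v) = ((u, 0) + (0, v) : EuclideanSpace ℝ (Fin d1) × EuclideanSpace ℝ (Fin d2)) := by
    simp
  rw [this, map_add, hxu, hyv]

lemma aux_line_deriv (hf : Differentiable ℝ (fun w : EuclideanSpace ℝ (Fin d1) × EuclideanSpace ℝ (Fin d2) => f w.1 w.2))
    (a u : EuclideanSpace ℝ (Fin d1)) (b v : EuclideanSpace ℝ (Fin d2)) (t : ℝ) :
    HasDerivAt (fun s : ℝ => f (a + s • u) (b + s • v))
      (⟪gradx f (a + t • u) (b + t • v), u⟫ + ⟪grady f (a + t • u) (b + t • v), v⟫) t := by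
  have hc : HasDerivAt (fun s : ℝ => ((a + s • u, b + s • v) :
      EuclideanSpace ℝ (Fin d1) × EuclideanSpace ℝ (Fin d2))) (u, v) t := by
    have h1 : HasDerivAt (fun s : ℝ => a + s • u) u t := by
      simpa using ((hasDerivAt_id t).smul_const u).const_add a
    have h2 : HasDerivAt (fun s : ℝ => b + s • v) v t := by
      simpa using ((hasDerivAt_id t).smul_const v).const_add b
    exact h1.prodMk h2
  have hLd := (hf (a + t • u, b + t • v)).hasFDerivAt
  have := hLd.comp_hasDerivAt t hc
  rwa [aux_fderiv_joint_apply hf] at this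

/-- Second-order Taylor estimate from `l`-smoothness. -/
lemma aux_taylor_f {l : ℝ} (hl : 0 < l) (hf : IsLSmooth l f)
    (a u : EuclideanSpace ℝ (Fin d1)) (b : EuclideanSpace ℝ (Fin d2))
    (v : EuclideanSpace ℝ (Fin d2)) :
    |f (a + u) (b + v) - f a b - (⟪gradx f a b, u⟫ + ⟪grady f a b, v⟫)|
      ≤ l / 2 * (‖u‖ ^ 2 + ‖v‖ ^ 2) := by
  have hD : ∀ t ∈ Icc (0:ℝ) 1,
      |(⟪gradx f (a + t • u) (b + t • v), u⟫ + ⟪grady f (a + t • u) (b + t • v), v⟫) -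
        (⟪gradx f (a + (0:ℝ) • u) (b + (0:ℝ) • v), u⟫ +
          ⟪grady f (a + (0:ℝ) • u) (b + (0:ℝ) • v), v⟫)|
        ≤ (l * (‖u‖ ^ 2 + ‖v‖ ^ 2)) * t := by
    intro t ht
    simp only [zero_smul, add_zero]
    set gxd := gradx f (a + t • u) (b + t • v) - gradx f a b with hgxd
    set gyd := grady f (a + t • u) (b + t • v) - grady f a b with hgyd
    have hlip := hf.2 (a + t • u) a (b + t • v) b
    have hnx : a + t • u - a = t • u := by abel
    have hny : b + t • v - b = t • v := by abel
    rw [hnx, hny] at hlip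
    have hsmul : ‖t • u‖ ^ 2 = t ^ 2 * ‖u‖ ^ 2 := by
      rw [norm_smul]; simp [mul_pow, sq_abs]
    have hsmul' : ‖t • v‖ ^ 2 = t ^ 2 * ‖v‖ ^ 2 := by
      rw [norm_smul]; simp [mul_pow, sq_abs]
    rw [hsmul, hsmul'] at hlip
    have habs : |(⟪gradx f (a + t • u) (b + t • v), u⟫ + ⟪grady f (a + t • u) (b + t • v), v⟫)
        - (⟪gradx f a b, u⟫ + ⟪grady f a b, v⟫)| ≤ ‖gxd‖ * ‖u‖ + ‖gyd‖ * ‖v‖ := by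
      have e1 : (⟪gradx f (a + t • u) (b + t • v), u⟫ + ⟪grady f (a + t • u) (b + t • v), v⟫)
          - (⟪gradx f a b, u⟫ + ⟪grady f a b, v⟫) = ⟪gxd, u⟫ + ⟪gyd, v⟫ := by
        rw [hgxd, hgyd, inner_sub_left, inner_sub_left]; ring
      rw [e1]
      calc |⟪gxd, u⟫ + ⟪gyd, v⟫| ≤ |⟪gxd, u⟫| + |⟪gyd, v⟫| := abs_add_le _ _
        _ ≤ ‖gxd‖ * ‖u‖ + ‖gyd‖ * ‖v‖ :=
            add_le_add (abs_real_inner_le_norm _ _) (abs_real_inner_le_norm _ _)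
    have hkey : ‖gxd‖ * ‖u‖ + ‖gyd‖ * ‖v‖ ≤ (l * (‖u‖ ^ 2 + ‖v‖ ^ 2)) * t := by
      have ht0 : 0 ≤ t := ht.1
      apply aux_le_of_sq_le_sq _ (by positivity) (by positivity)
      have hmul := mul_le_mul_of_nonneg_right hlip
        (by positivity : (0:ℝ) ≤ ‖u‖ ^ 2 + ‖v‖ ^ 2)
      nlinarith [sq_nonneg (‖gxd‖ * ‖v‖ - ‖gyd‖ * ‖u‖)]
    exact le_trans habs hkey
  have := aux_taylor_est (fun s : ℝ => f (a + s • u) (b + s • v))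
    (fun t => ⟪gradx f (a + t • u) (b + t • v), u⟫ + ⟪grady f (a + t • u) (b + t • v), v⟫)
    (l * (‖u‖ ^ 2 + ‖v‖ ^ 2)) (aux_line_deriv hf.1 a u b v) hD
  simp only [one_smul, zero_smul, add_zero] at this
  calc |f (a + u) (b + v) - f a b - (⟪gradx f a b, u⟫ + ⟪grady f a b, v⟫)|
      ≤ (l * (‖u‖ ^ 2 + ‖v‖ ^ 2)) / 2 := this
    _ = l / 2 * (‖u‖ ^ 2 + ‖v‖ ^ 2) := by ring

/-- The gradient of `x ↦ f̂(x, b, z)` vanishes at a global minimizer. -/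
lemma aux_grad_fhat_zero
    (hf : Differentiable ℝ (fun w : EuclideanSpace ℝ (Fin d1) × EuclideanSpace ℝ (Fin d2) => f w.1 w.2))
    (l : ℝ) (z : EuclideanSpace ℝ (Fin d1)) (b : EuclideanSpace ℝ (Fin d2))
    (a : EuclideanSpace ℝ (Fin d1))
    (hmin : ∀ x, fhat f (2 * l) a b z ≤ fhat f (2 * l) x b z) :
    gradx f a b + (2 * l) • (a - z) = 0 := by
  have h1 := (aux_gradx_hasGradient hf a b).hasFDerivAt
  have hid : HasFDerivAt (fun t : EuclideanSpace ℝ (Fin d1) => t - z)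
      (ContinuousLinearMap.id ℝ _) a := (hasFDerivAt_id a).sub_const z
  have hinner := ((hid.inner ℝ hid).const_mul ((2 * l) / 2))
  have hsum := h1.add hinner
  have heq : (fun t => f t b + (2 * l) / 2 * ⟪t - z, t - z⟫) =
      (fun t => fhat f (2 * l) t b z) := by
    funext t; simp only [fhat, real_inner_self_eq_norm_sq]
  change HasFDerivAt (fun t => f t b + (2 * l) / 2 * ⟪t - z, t - z⟫) _ a at hsum
  rw [heq] at hsum
  have hloc : IsLocalMin (fun t => fhat f (2 * l) t b z) a :=
    Filter.Eventually.of_forall hmin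
  have h0 := hloc.hasFDerivAt_eq_zero hsum
  set w := gradx f a b + (2 * l) • (a - z) with hw
  have happ := congrFun (congrArg DFunLike.coe h0) w
  simp only [ContinuousLinearMap.add_apply, ContinuousLinearMap.coe_smul',
    ContinuousLinearMap.coe_comp', Function.comp_apply, ContinuousLinearMap.zero_apply,
    InnerProductSpace.toDual_apply_apply, Pi.smul_apply, ContinuousLinearMap.prod_apply,
    ContinuousLinearMap.coe_id', id_eq, fderivInnerCLM_apply, ContinuousLinearMap.coe_sub',
    Pi.sub_apply, smul_eq_mul] at happ
  have hinner_w : ⟪w, w⟫ = 0 := by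
    rw [hw, inner_add_left, real_inner_smul_left, ← hw]
    have hc : ⟪a - z, w⟫ = ⟪w, a - z⟫ := real_inner_comm _ _
    rw [← hc] at happ
    linear_combination happ
  exact inner_self_eq_zero.mp hinner_w

lemma aux_gx_lipx {l : ℝ} (hl : 0 < l) (hf : IsLSmooth l f)
    (c d : EuclideanSpace ℝ (Fin d1)) (b : EuclideanSpace ℝ (Fin d2)) :
    ‖gradx f c b - gradx f d b‖ ≤ l * ‖c - d‖ := by
  have h := hf.2 c d b b
  simp only [sub_self, norm_zero] at h
  apply aux_le_of_sq_le_sq _ (norm_nonneg _) (by positivity)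
  nlinarith [sq_nonneg ‖grady f c b - grady f d b‖]

lemma aux_gx_lipy {l : ℝ} (hl : 0 < l) (hf : IsLSmooth l f)
    (c : EuclideanSpace ℝ (Fin d1)) (b1 b2 : EuclideanSpace ℝ (Fin d2)) :
    ‖gradx f c b1 - gradx f c b2‖ ≤ l * ‖b1 - b2‖ := by
  have h := hf.2 c c b1 b2
  simp only [sub_self, norm_zero] at h
  apply aux_le_of_sq_le_sq _ (norm_nonneg _) (by positivity)
  nlinarith [sq_nonneg ‖grady f c b1 - grady f c b2‖]

lemma aux_gy_lipx {l : ℝ} (hl : 0 < l) (hf : IsLSmooth l f)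
    (c d : EuclideanSpace ℝ (Fin d1)) (b : EuclideanSpace ℝ (Fin d2)) :
    ‖grady f c b - grady f d b‖ ≤ l * ‖c - d‖ := by
  have h := hf.2 c d b b
  simp only [sub_self, norm_zero] at h
  apply aux_le_of_sq_le_sq _ (norm_nonneg _) (by positivity)
  nlinarith [sq_nonneg ‖gradx f c b - gradx f d b‖]

lemma aux_mono {l : ℝ} (hl : 0 < l) (hf : IsLSmooth l f)
    (z c d : EuclideanSpace ℝ (Fin d1)) (b : EuclideanSpace ℝ (Fin d2)) :
    l * ‖c - d‖ ^ 2
      ≤ ⟪(gradx f c b + (2 * l) • (c - z)) - (gradx f d b + (2 * l) • (d - z)), c - d⟫ := by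
  have hsplit : (gradx f c b + (2 * l) • (c - z)) - (gradx f d b + (2 * l) • (d - z))
      = (gradx f c b - gradx f d b) + (2 * l) • (c - d) := by
    rw [smul_sub (2 * l) c z, smul_sub (2 * l) d z, smul_sub (2 * l) c d]; abel
  rw [hsplit, inner_add_left, real_inner_smul_left, real_inner_self_eq_norm_sq]
  have h1 : -(l * ‖c - d‖ * ‖c - d‖) ≤ ⟪gradx f c b - gradx f d b, c - d⟫ := by
    have hcs := (abs_le.mp (abs_real_inner_le_norm (gradx f c b - gradx f d b) (c - d))).1
    have h2 := mul_le_mul_of_nonneg_right (aux_gx_lipx hl hf c d b) (norm_nonneg (c - d))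
    linarith
  nlinarith

end Aux

/-- joint descent of `f̂ − 2Ψ`, unconstrained case: with `p = 2l`,
`0 < η_x ≤ 1/(1000l)`, `η_y = η_x/256`, `x' = x − η_x ∇_x f̂(x,y,z)`, `y' = y + η_y ∇_y f(x,y)`,
`f̂(x,y,z) − f̂(x',y',z) + 2(Ψ(y',z) − Ψ(y,z)) ≥ (η_x/8)‖∇_x f̂(x,y,z)‖² + (η_y/8)‖∇_y f(x,y)‖²`,
where `Ψ(y,z) = f̂(x*(y,z),y,z)`. -/
theorem statement11 {d1 d2 : ℕ} (l ηx ηy : ℝ) (hl : 0 < l)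
    (hηx : 0 < ηx) (hηx' : ηx ≤ 1 / (1000 * l)) (hηy : ηy = ηx / 256)
    (f : EuclideanSpace ℝ (Fin d1) → EuclideanSpace ℝ (Fin d2) → ℝ)
    (hf : IsLSmooth l f)
    (xstar : EuclideanSpace ℝ (Fin d2) → EuclideanSpace ℝ (Fin d1) → EuclideanSpace ℝ (Fin d1))
    (hxstar : ∀ y z x, fhat f (2 * l) (xstar y z) y z ≤ fhat f (2 * l) x y z)
    (x z : EuclideanSpace ℝ (Fin d1)) (y : EuclideanSpace ℝ (Fin d2))
    (x' : EuclideanSpace ℝ (Fin d1))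
    (hx' : x' = x - ηx • (gradx f x y + (2 * l) • (x - z)))
    (y' : EuclideanSpace ℝ (Fin d2))
    (hy' : y' = y + ηy • grady f x y) :
    fhat f (2 * l) x y z - fhat f (2 * l) x' y' z
        + 2 * (fhat f (2 * l) (xstar y' z) y' z - fhat f (2 * l) (xstar y z) y z)
      ≥ ηx / 8 * ‖gradx f x y + (2 * l) • (x - z)‖ ^ 2
        + ηy / 8 * ‖grady f x y‖ ^ 2 := by
  have hηy0 : 0 ≤ ηy := by rw [hηy]; positivity
  have hlηx : l * ηx ≤ 1 / 1000 := by
    have h := mul_le_mul_of_nonneg_left hηx' hl.le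
    have : l * (1 / (1000 * l)) = 1 / 1000 := by field_simp
    linarith
  set gx := gradx f x y + (2 * l) • (x - z) with hgx
  set gy := grady f x y with hgy
  have hA0 : (0:ℝ) ≤ ‖gx‖ := norm_nonneg _
  have hB0 : (0:ℝ) ≤ ‖gy‖ := norm_nonneg _
  set u := (-ηx) • gx with hu
  set v := ηy • gy with hv
  have hxu : x' = x + u := by rw [hx', hu, neg_smul, ← sub_eq_add_neg]
  have hyv : y' = y + v := by rw [hy', hv]
  have hnu : ‖u‖ ^ 2 = ηx ^ 2 * ‖gx‖ ^ 2 := by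
    rw [hu, norm_smul, Real.norm_eq_abs, mul_pow, sq_abs, neg_sq]
  have hnv : ‖v‖ ^ 2 = ηy ^ 2 * ‖gy‖ ^ 2 := by
    rw [hv, norm_smul, Real.norm_eq_abs, mul_pow, sq_abs]
  have hvnorm : ‖v‖ = ηy * ‖gy‖ := by
    rw [hv, norm_smul, Real.norm_eq_abs, abs_of_nonneg hηy0]
  -- Step 1: descent for fhat
  have e1 : ⟪gx, u⟫ = -(ηx * ‖gx‖ ^ 2) := by
    rw [hu, real_inner_smul_right, real_inner_self_eq_norm_sq]; ring
  have e2 : ⟪gy, v⟫ = ηy * ‖gy‖ ^ 2 := by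
    rw [hv, real_inner_smul_right, real_inner_self_eq_norm_sq]
  have e3 : gradx f x y = gx - (2 * l) • (x - z) := by rw [hgx]; abel
  have e4 : ⟪gradx f x y, u⟫ = ⟪gx, u⟫ - 2 * l * ⟪x - z, u⟫ := by
    rw [e3, inner_sub_left, real_inner_smul_left]
  have hquad : ‖x' - z‖ ^ 2 = ‖x - z‖ ^ 2 + 2 * ⟪x - z, u⟫ + ‖u‖ ^ 2 := by
    rw [hxu, show x + u - z = (x - z) + u from by abel]
    exact norm_add_sq_real _ _
  have step1 : fhat f (2 * l) x y z - fhat f (2 * l) x' y' z ≥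
      ηx * ‖gx‖ ^ 2 - ηy * ‖gy‖ ^ 2 - l / 2 * (ηx ^ 2 * ‖gx‖ ^ 2 + ηy ^ 2 * ‖gy‖ ^ 2)
        - l * ηx ^ 2 * ‖gx‖ ^ 2 := by
    have htay := aux_taylor_f hl hf x u y v
    rw [← hgy, ← hxu, ← hyv] at htay
    have h2 := (abs_le.mp htay).2
    rw [e4, e1, e2, hnu, hnv] at h2
    have expand : fhat f (2 * l) x' y' z
        = f x' y' + l * ‖x - z‖ ^ 2 + 2 * l * ⟪x - z, u⟫ + l * (ηx ^ 2 * ‖gx‖ ^ 2) := by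
      simp only [fhat]; rw [hquad, hnu]; ring
    have expand0 : fhat f (2 * l) x y z = f x y + l * ‖x - z‖ ^ 2 := by
      simp only [fhat]; ring
    rw [expand, expand0]
    linarith [h2]
  have hgx_lipy := aux_gx_lipy hl hf
  have hgy_lipx := aux_gy_lipx hl hf
  have hmono := aux_mono hl hf z
  set a := xstar y z with ha
  set a' := xstar y' z with ha'
  have hGa : gradx f a y + (2 * l) • (a - z) = 0 :=
    aux_grad_fhat_zero hf.1 l z y a (hxstar y z)
  have hGa' : gradx f a' y' + (2 * l) • (a' - z) = 0 :=
    aux_grad_fhat_zero hf.1 l z y' a' (hxstar y' z)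
  -- distance from x to the minimizer
  have hxa : l * ‖x - a‖ ≤ ‖gx‖ := by
    have hm := hmono x a y
    have hsub : (gradx f x y + (2 * l) • (x - z)) - (gradx f a y + (2 * l) • (a - z)) = gx := by
      rw [hGa, sub_zero, ← hgx]
    rw [hsub] at hm
    have hcs : ⟪gx, x - a⟫ ≤ ‖gx‖ * ‖x - a‖ := real_inner_le_norm _ _
    rcases eq_or_lt_of_le (norm_nonneg (x - a)) with h0 | h0
    · rw [← h0]; simpa using hA0
    · nlinarith
  -- Lipschitz continuity of the minimizer
  have haa : ‖a' - a‖ ≤ ‖y' - y‖ := by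
    have hm := hmono a' a y
    have h2 : (2 * l) • (a' - z) = -gradx f a' y' := eq_neg_of_add_eq_zero_right hGa'
    have hsub : (gradx f a' y + (2 * l) • (a' - z)) - (gradx f a y + (2 * l) • (a - z))
        = gradx f a' y - gradx f a' y' := by
      rw [hGa, sub_zero, h2, sub_eq_add_neg]
    rw [hsub] at hm
    have hlipy := hgx_lipy a' y y'
    have hcs : ⟪gradx f a' y - gradx f a' y', a' - a⟫ ≤ (l * ‖y - y'‖) * ‖a' - a‖ :=
      le_trans (real_inner_le_norm _ _)
        (mul_le_mul_of_nonneg_right hlipy (norm_nonneg _))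
    have hrev : ‖y' - y‖ = ‖y - y'‖ := norm_sub_rev _ _
    rcases eq_or_lt_of_le (norm_nonneg (a' - a)) with h0 | h0
    · rw [← h0]; exact norm_nonneg _
    · have hchain : (l * ‖a' - a‖) * ‖a' - a‖ ≤ (l * ‖y - y'‖) * ‖a' - a‖ := by
        nlinarith [hm, hcs]
      have h1 := le_of_mul_le_mul_right hchain h0
      have h2 := le_of_mul_le_mul_left h1 hl
      rw [hrev]; exact h2
  have hyynorm : ‖y' - y‖ = ηy * ‖gy‖ := by
    rw [hyv, add_sub_cancel_left, hvnorm]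
  have ha'x : l * ‖a' - x‖ ≤ l * (ηy * ‖gy‖) + ‖gx‖ := by
    have htri : ‖a' - x‖ ≤ ‖a' - a‖ + ‖a - x‖ := by
      have := dist_triangle a' a x
      simpa [dist_eq_norm] using this
    have hax : ‖a - x‖ = ‖x - a‖ := norm_sub_rev _ _
    have h1 := mul_le_mul_of_nonneg_left htri hl.le
    have h2 := mul_le_mul_of_nonneg_left haa hl.le
    rw [hyynorm] at h2
    rw [hax] at h1
    nlinarith
  -- Step 3: lower bound on the change of Ψ
  have step3 : fhat f (2 * l) a' y' z - fhat f (2 * l) a y z ≥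
      ηy * ‖gy‖ ^ 2 - (l * (ηy * ‖gy‖) + ‖gx‖) * (ηy * ‖gy‖) - l / 2 * (ηy ^ 2 * ‖gy‖ ^ 2) := by
    have h0 : fhat f (2 * l) a y z ≤ fhat f (2 * l) a' y z := hxstar y z a'
    have hdiff : fhat f (2 * l) a' y' z - fhat f (2 * l) a' y z = f a' y' - f a' y := by
      simp only [fhat]; ring
    have htay2 := aux_taylor_f hl hf a' 0 y v
    simp only [add_zero, inner_zero_right, zero_add, norm_zero] at htay2
    rw [← hyv] at htay2
    have hlow := (abs_le.mp htay2).1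
    have hip : ηy * ‖gy‖ ^ 2 - (l * (ηy * ‖gy‖) + ‖gx‖) * (ηy * ‖gy‖) ≤ ⟪grady f a' y, v⟫ := by
      have hsplit : ⟪grady f a' y, v⟫ = ⟪gy, v⟫ + ⟪grady f a' y - gy, v⟫ := by
        rw [inner_sub_left]; ring
      have hcs1 := (abs_le.mp (abs_real_inner_le_norm (grady f a' y - gy) v)).1
      have hlip2 : ‖grady f a' y - gy‖ ≤ l * ‖a' - x‖ := by
        rw [hgy]; exact hgy_lipx a' x y
      have hcs2 : ‖grady f a' y - gy‖ * ‖v‖ ≤ (l * (ηy * ‖gy‖) + ‖gx‖) * (ηy * ‖gy‖) := by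
        rw [hvnorm]
        have hb1 : ‖grady f a' y - gy‖ ≤ l * (ηy * ‖gy‖) + ‖gx‖ := le_trans hlip2 ha'x
        have hb2 : (0:ℝ) ≤ ηy * ‖gy‖ := mul_nonneg hηy0 hB0
        exact mul_le_mul_of_nonneg_right hb1 hb2 |>.trans_eq rfl
      have hvn : ‖grady f a' y - gy‖ * ‖v‖ = ‖grady f a' y - gy‖ * ‖v‖ := rfl
      rw [hsplit, e2]
      linarith [hcs1, hcs2]
    have hnv2 : l / 2 * (0 ^ 2 + ‖v‖ ^ 2) = l / 2 * (ηy ^ 2 * ‖gy‖ ^ 2) := by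
      rw [hnv]; ring
    linarith [hlow, hip, h0, hnv2, hdiff]
  -- Final combination
  have h3 : 2 * (‖gx‖ * ‖gy‖) ≤ 4 * ‖gx‖ ^ 2 + ‖gy‖ ^ 2 / 4 := by
    nlinarith [sq_nonneg (2 * ‖gx‖ - ‖gy‖ / 2)]
  have h3' : ηx * (2 * (‖gx‖ * ‖gy‖)) ≤ ηx * (4 * ‖gx‖ ^ 2 + ‖gy‖ ^ 2 / 4) :=
    mul_le_mul_of_nonneg_left h3 hηx.le
  have h4 : l * ηx ^ 2 * ‖gx‖ ^ 2 ≤ ηx * ‖gx‖ ^ 2 / 1000 := by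
    have := mul_le_mul_of_nonneg_right hlηx (mul_nonneg hηx.le (sq_nonneg ‖gx‖))
    nlinarith
  have h5 : l * ηx ^ 2 * ‖gy‖ ^ 2 ≤ ηx * ‖gy‖ ^ 2 / 1000 := by
    have := mul_le_mul_of_nonneg_right hlηx (mul_nonneg hηx.le (sq_nonneg ‖gy‖))
    nlinarith
  rw [hηy] at step1 step3 ⊢
  linarith [step1, step3, h3', h4, h5, mul_nonneg hηx.le (sq_nonneg ‖gx‖),
    mul_nonneg hηx.le (sq_nonneg ‖gy‖)]
end

section
/- Let p = 2l, 0 < η_x ≤ 1/(1000l), and η_y = η_x/256. Fix x, z ∈ ℝ^{d1} and y ∈ Y, and set x' := x − η_x∇_x f̂(x,y,z) and y' := P_Y(y + η_y∇_y f(x,y)). Then f̂(x,y,z) − f̂(x',y',z) + 2(Ψ(y',z) − Ψ(y,z)) ≥ (η_x/8)‖∇_x f̂(x,y,z)‖² + (1/(8η_y))‖y' − y‖². -/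
open Set Metric
open scoped RealInnerProductSpace

section Aux

variable {E : Type*} [NormedAddCommGroup E] [InnerProductSpace ℝ E] [CompleteSpace E]

lemma norm_gradient_sub_eq (φ : E → ℝ) (p q : E) :
    ‖fderiv ℝ φ p - fderiv ℝ φ q‖ = ‖gradient φ p - gradient φ q‖ := by
  rw [gradient, gradient, ← LinearIsometryEquiv.map_sub, LinearIsometryEquiv.norm_map]

lemma inner_gradient_eq (φ : E → ℝ) (u v : E) :
    ⟪gradient φ u, v⟫ = fderiv ℝ φ u v := by
  rw [gradient, ← InnerProductSpace.toDual_apply_apply, LinearIsometryEquiv.apply_symm_apply]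

lemma descent_bound {φ : E → ℝ} (hφ : Differentiable ℝ φ) {C : ℝ} (hC : 0 ≤ C)
    (hlip : ∀ p q : E, ‖gradient φ p - gradient φ q‖ ≤ C * ‖p - q‖) (u v : E) :
    |φ v - φ u - ⟪gradient φ u, v - u⟫| ≤ C * ‖v - u‖ ^ 2 := by
  have key := Convex.norm_image_sub_le_of_norm_hasFDerivWithin_le'
    (f := φ) (f' := fun w => fderiv ℝ φ w) (φ := fderiv ℝ φ u) (C := C * ‖v - u‖)
    (s := Metric.closedBall u ‖v - u‖) (x := u) (y := v)
    (fun w _ => ((hφ w).hasFDerivAt).hasFDerivWithinAt)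
    (fun w hw => by
      rw [norm_gradient_sub_eq]
      calc ‖gradient φ w - gradient φ u‖ ≤ C * ‖w - u‖ := hlip w u
        _ ≤ C * ‖v - u‖ := by
            refine mul_le_mul_of_nonneg_left ?_ hC
            simpa [Metric.mem_closedBall, dist_eq_norm] using hw)
    (convex_closedBall _ _) (Metric.mem_closedBall_self (norm_nonneg _))
    (by simp [Metric.mem_closedBall, dist_eq_norm])
  have hfd : (fderiv ℝ φ u) (v - u) = ⟪gradient φ u, v - u⟫ := (inner_gradient_eq φ u (v - u)).symm
  rw [hfd] at key
  calc |φ v - φ u - ⟪gradient φ u, v - u⟫|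
      = ‖φ v - φ u - ⟪gradient φ u, v - u⟫‖ := (Real.norm_eq_abs _).symm
    _ ≤ C * ‖v - u‖ * ‖v - u‖ := key
    _ = C * ‖v - u‖ ^ 2 := by ring

lemma hasGradientAt_quad (p : ℝ) (z u : E) :
    HasGradientAt (fun w => p / 2 * ‖w - z‖ ^ 2) (p • (u - z)) u := by
  have h1 : HasFDerivAt (fun w : E => w - z) (ContinuousLinearMap.id ℝ E) u :=
    (hasFDerivAt_id u).sub_const z
  have h2 := (h1.inner ℝ h1).const_mul (p / 2)
  have heq : ((p / 2) • ((fderivInnerCLM ℝ (u - z, u - z)).comp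
      ((ContinuousLinearMap.id ℝ E).prod (ContinuousLinearMap.id ℝ E))))
      = InnerProductSpace.toDual ℝ E (p • (u - z)) := by
    apply ContinuousLinearMap.ext
    intro w
    simp only [ContinuousLinearMap.smul_apply, ContinuousLinearMap.coe_comp', Function.comp_apply,
      ContinuousLinearMap.prod_apply, ContinuousLinearMap.coe_id', id_eq,
      fderivInnerCLM_apply, InnerProductSpace.toDual_apply_apply, real_inner_smul_left,
      smul_eq_mul]
    rw [real_inner_comm w (u - z)]
    ring
  rw [heq] at h2
  have h3 : HasGradientAt (fun w : E => p / 2 * ⟪w - z, w - z⟫) (p • (u - z)) u := h2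
  have hfun : (fun w : E => p / 2 * ‖w - z‖ ^ 2) = fun w : E => p / 2 * ⟪w - z, w - z⟫ := by
    funext w; rw [real_inner_self_eq_norm_sq]
  rw [hfun]
  exact h3

lemma proj_inner_le_zero (Y : Set E) (hconv : Convex ℝ Y) (projY : E → E)
    (hmem : ∀ v, projY v ∈ Y) (hmin : ∀ v, ∀ w ∈ Y, ‖v - projY v‖ ≤ ‖v - w‖)
    (v w : E) (hw : w ∈ Y) : ⟪v - projY v, w - projY v⟫ ≤ 0 := by
  have hne : Nonempty Y := ⟨⟨projY v, hmem v⟩⟩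
  have hiInf : ‖v - projY v‖ = ⨅ w : Y, ‖v - (w : E)‖ := by
    refine le_antisymm (le_ciInf fun w => hmin v w w.2) ?_
    have hbdd : BddBelow (Set.range fun w : Y => ‖v - (w : E)‖) :=
      ⟨0, fun r hr => by obtain ⟨w, rfl⟩ := hr; exact norm_nonneg _⟩
    exact ciInf_le hbdd ⟨projY v, hmem v⟩
  exact ((norm_eq_iInf_iff_real_inner_le_zero hconv (hmem v)).1 hiInf) w hw

lemma sq_le_imp {A B : ℝ} (h : A ^ 2 ≤ B ^ 2) (hA : 0 ≤ A) (hB : 0 ≤ B) : A ≤ B := by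
  nlinarith

end Aux
lemma final_numeric (l ηx a b F1 F2 F3 I0 I1 I2 : ℝ)
    (hl : 0 < l) (hηx : 0 < ηx) (hlηx : l * ηx ≤ 1/1000)
    (ha : 0 ≤ a) (hb : 0 ≤ b)
    (h1 : F1 ≥ ηx*a^2 - 2*l*ηx^2*a^2)
    (h2 : F2 ≥ -(I0 + I1) - l*b^2)
    (h3 : F3 ≥ (I0 + I2) - l*b^2)
    (hI0 : b^2 ≤ (ηx/256) * I0)
    (hI1 : |I1| ≤ l*(ηx*a)*b)
    (hI2 : |I2| ≤ (a + l*b)*b) :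
    F1 + F2 + 2*F3 ≥ ηx/8*a^2 + 1/(8*(ηx/256))*b^2 := by
  have hc : 1/(8*(ηx/256)) = 32/ηx := by
    rw [show 8*(ηx/256) = ηx/32 by ring, one_div_div]
  rw [hc, ge_iff_le, ← sub_nonneg]
  have hI0' : 256*b^2 ≤ ηx * I0 := by nlinarith [hI0]
  have hI1'' := (abs_le.1 hI1).2
  have hI2' := (abs_le.1 hI2).1
  have key : 0 ≤ ηx * (F1 + F2 + 2*F3 - (ηx/8*a^2 + 32/ηx*b^2)) := by
    have expand : ηx * (F1 + F2 + 2*F3 - (ηx/8*a^2 + 32/ηx*b^2))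
        = ηx*F1 + ηx*F2 + 2*(ηx*F3) - ηx^2/8*a^2 - 32*b^2 := by
      field_simp
      ring
    rw [expand]
    have m1 : ηx*(ηx*a^2 - 2*l*ηx^2*a^2) ≤ ηx*F1 := mul_le_mul_of_nonneg_left h1 hηx.le
    have m2 : ηx*(-(I0 + I1) - l*b^2) ≤ ηx*F2 := mul_le_mul_of_nonneg_left h2 hηx.le
    have m3 : ηx*((I0 + I2) - l*b^2) ≤ ηx*F3 := mul_le_mul_of_nonneg_left h3 hηx.le
    have mI1 : ηx*I1 ≤ ηx*(l*(ηx*a)*b) := mul_le_mul_of_nonneg_left hI1'' hηx.le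
    have mI2 : ηx*(-((a + l*b)*b)) ≤ ηx*I2 := mul_le_mul_of_nonneg_left hI2' hηx.le
    have q1 : l*ηx*(ηx*a*b) ≤ (1/1000)*(ηx*a*b) :=
      mul_le_mul_of_nonneg_right hlηx (by positivity)
    have q2 : l*ηx*(ηx^2*a^2) ≤ (1/1000)*(ηx^2*a^2) :=
      mul_le_mul_of_nonneg_right hlηx (by positivity)
    have q3 : l*ηx*(b^2) ≤ (1/1000)*(b^2) :=
      mul_le_mul_of_nonneg_right hlηx (by positivity)
    nlinarith [m1, m2, m3, mI1, mI2, hI0', q1, q2, q3,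
      sq_nonneg (ηx*a - 2*b), mul_nonneg (mul_nonneg hηx.le ha) hb, sq_nonneg b,
      sq_nonneg (ηx*a)]
  by_contra hcon
  push_neg at hcon
  nlinarith [mul_pos hηx (neg_pos.2 hcon), key]
set_option maxHeartbeats 1000000 in
/-- joint descent of `f̂ − 2Ψ`, constrained case: with `p = 2l`,
`0 < η_x ≤ 1/(1000l)`, `η_y = η_x/256`, `x' = x − η_x ∇_x f̂(x,y,z)`,
`y' = P_Y(y + η_y ∇_y f(x,y))`,
`f̂(x,y,z) − f̂(x',y',z) + 2(Ψ(y',z) − Ψ(y,z)) ≥ (η_x/8)‖∇_x f̂(x,y,z)‖² + (1/(8η_y))‖y' − y‖²`. -/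
theorem statement12 {d1 d2 : ℕ} (l ηx ηy : ℝ) (hl : 0 < l)
    (hηx : 0 < ηx) (hηx' : ηx ≤ 1 / (1000 * l)) (hηy : ηy = ηx / 256)
    (f : EuclideanSpace ℝ (Fin d1) → EuclideanSpace ℝ (Fin d2) → ℝ)
    (hf : IsLSmooth l f)
    (Y : Set (EuclideanSpace ℝ (Fin d2))) (hYne : Y.Nonempty) (hYcl : IsClosed Y)
    (hYconv : Convex ℝ Y)
    (projY : EuclideanSpace ℝ (Fin d2) → EuclideanSpace ℝ (Fin d2))
    (hprojY_mem : ∀ v, projY v ∈ Y)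
    (hprojY : ∀ v, ∀ w ∈ Y, ‖v - projY v‖ ≤ ‖v - w‖)
    (xstar : EuclideanSpace ℝ (Fin d2) → EuclideanSpace ℝ (Fin d1) → EuclideanSpace ℝ (Fin d1))
    (hxstar : ∀ y z x, fhat f (2 * l) (xstar y z) y z ≤ fhat f (2 * l) x y z)
    (x z : EuclideanSpace ℝ (Fin d1)) (y : EuclideanSpace ℝ (Fin d2)) (hy : y ∈ Y)
    (x' : EuclideanSpace ℝ (Fin d1))
    (hx' : x' = x - ηx • (gradx f x y + (2 * l) • (x - z)))
    (y' : EuclideanSpace ℝ (Fin d2))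
    (hy' : y' = projY (y + ηy • grady f x y)) :
    fhat f (2 * l) x y z - fhat f (2 * l) x' y' z
        + 2 * (fhat f (2 * l) (xstar y' z) y' z - fhat f (2 * l) (xstar y z) y z)
      ≥ ηx / 8 * ‖gradx f x y + (2 * l) • (x - z)‖ ^ 2
        + 1 / (8 * ηy) * ‖y' - y‖ ^ 2 := by
  have hl0 : (0:ℝ) ≤ l := hl.le
  have hlηx : l * ηx ≤ 1 / 1000 := by
    have h1000 : (0:ℝ) < 1000 * l := by positivity
    have h := (le_div_iff₀ h1000).1 hηx'
    nlinarith [h]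
  -- differentiability of the partial maps
  have hdx : ∀ y₀, Differentiable ℝ (fun u => f u y₀) := fun y₀ =>
    hf.1.comp (differentiable_id.prodMk (differentiable_const y₀))
  have hdy : ∀ x₀, Differentiable ℝ (fun v => f x₀ v) := fun x₀ =>
    hf.1.comp ((differentiable_const x₀).prodMk differentiable_id)
  -- Lipschitz properties of partial gradients
  have gx_lip_x : ∀ u v y₀, ‖gradx f u y₀ - gradx f v y₀‖ ≤ l * ‖u - v‖ := by
    intro u v y₀
    refine sq_le_imp ?_ (norm_nonneg _) (by positivity)
    have h := hf.2 u v y₀ y₀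
    simp only [sub_self, norm_zero] at h
    nlinarith [sq_nonneg ‖grady f u y₀ - grady f v y₀‖, h]
  have gx_lip_y : ∀ u y₁ y₂, ‖gradx f u y₁ - gradx f u y₂‖ ≤ l * ‖y₁ - y₂‖ := by
    intro u y₁ y₂
    refine sq_le_imp ?_ (norm_nonneg _) (by positivity)
    have h := hf.2 u u y₁ y₂
    simp only [sub_self, norm_zero] at h
    nlinarith [sq_nonneg ‖grady f u y₁ - grady f u y₂‖, h]
  have gy_lip_x : ∀ u v y₀, ‖grady f u y₀ - grady f v y₀‖ ≤ l * ‖u - v‖ := by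
    intro u v y₀
    refine sq_le_imp ?_ (norm_nonneg _) (by positivity)
    have h := hf.2 u v y₀ y₀
    simp only [sub_self, norm_zero] at h
    nlinarith [sq_nonneg ‖gradx f u y₀ - gradx f v y₀‖, h]
  have gy_lip_y : ∀ u y₁ y₂, ‖grady f u y₁ - grady f u y₂‖ ≤ l * ‖y₁ - y₂‖ := by
    intro u y₁ y₂
    refine sq_le_imp ?_ (norm_nonneg _) (by positivity)
    have h := hf.2 u u y₁ y₂
    simp only [sub_self, norm_zero] at h
    nlinarith [sq_nonneg ‖gradx f u y₁ - gradx f u y₂‖, h]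
  set g : EuclideanSpace ℝ (Fin d1) := gradx f x y + (2 * l) • (x - z) with hg
  -- step identities
  have hxd : x' - x = -(ηx • g) := by rw [hx']; abel
  have hnormxd : ‖x' - x‖ = ηx * ‖g‖ := by
    rw [hxd, norm_neg, norm_smul, Real.norm_eq_abs, abs_of_pos hηx]
  have hinner1 : ⟪g, x' - x⟫ = -(ηx * ‖g‖^2) := by
    rw [hxd, inner_neg_right, real_inner_smul_right, real_inner_self_eq_norm_sq]
  -- descent lemmas
  have D1 : |f x' y - f x y - ⟪gradx f x y, x' - x⟫| ≤ l * ‖x' - x‖ ^ 2 :=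
    descent_bound (hdx y) hl0 (fun p q => gx_lip_x p q y) x x'
  have D2 : |f x' y' - f x' y - ⟪grady f x' y, y' - y⟫| ≤ l * ‖y' - y‖ ^ 2 :=
    descent_bound (hdy x') hl0 (fun p q => gy_lip_y x' p q) y y'
  have D3 : |f (xstar y' z) y' - f (xstar y' z) y - ⟪grady f (xstar y' z) y, y' - y⟫|
      ≤ l * ‖y' - y‖ ^ 2 :=
    descent_bound (hdy (xstar y' z)) hl0 (fun p q => gy_lip_y (xstar y' z) p q) y y'
  -- quadratic expansion
  have Q : ‖x' - z‖^2 = ‖x - z‖^2 + 2*⟪x - z, x' - x⟫ + ‖x' - x‖^2 := by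
    have h : x' - z = (x - z) + (x' - x) := by abel
    rw [h, norm_add_sq_real]
  have hsplit : ⟪g, x' - x⟫ = ⟪gradx f x y, x' - x⟫ + (2*l) * ⟪x - z, x' - x⟫ := by
    rw [hg, inner_add_left, real_inner_smul_left]
  -- e1 : x-descent
  have e1 : fhat f (2*l) x y z - fhat f (2*l) x' y z ≥ ηx * ‖g‖^2 - 2*l*ηx^2*‖g‖^2 := by
    have hD1 := (abs_le.1 D1).2
    have expand : fhat f (2*l) x' y z - fhat f (2*l) x y z
        = (f x' y - f x y) + 2*l*⟪x - z, x' - x⟫ + l*‖x' - x‖^2 := by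
      simp only [fhat]; rw [Q]; ring
    rw [hnormxd] at hD1 expand
    nlinarith [hD1, expand, hsplit, hinner1]
  -- e2 : y-ascent control
  have e2 : fhat f (2*l) x' y z - fhat f (2*l) x' y' z
      ≥ -⟪grady f x' y, y' - y⟫ - l*‖y' - y‖^2 := by
    have cancel2 : fhat f (2*l) x' y z - fhat f (2*l) x' y' z = f x' y - f x' y' := by
      simp only [fhat]; ring
    rw [cancel2]
    linarith [(abs_le.1 D2).2]
  -- e3 : Psi increase
  have e3 : fhat f (2*l) (xstar y' z) y' z - fhat f (2*l) (xstar y z) y z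
      ≥ ⟪grady f (xstar y' z) y, y' - y⟫ - l*‖y' - y‖^2 := by
    have cancel3 : fhat f (2*l) (xstar y' z) y' z - fhat f (2*l) (xstar y' z) y z
        = f (xstar y' z) y' - f (xstar y' z) y := by
      simp only [fhat]; ring
    have hmin := hxstar y z (xstar y' z)
    have hD3 := (abs_le.1 D3).1
    linarith [cancel3, hmin, hD3]
  -- projection inequality
  have hF6 : ‖y' - y‖^2 ≤ ηy * ⟪grady f x y, y' - y⟫ := by
    have hproj0 := proj_inner_le_zero Y hYconv projY hprojY_mem hprojY
      (y + ηy • grady f x y) y hy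
    rw [← hy'] at hproj0
    have h1 : y + ηy • grady f x y - y' = (y - y') + ηy • grady f x y := by abel
    rw [h1, inner_add_left] at hproj0
    have h3 : ⟪y - y', y - y'⟫ = ‖y' - y‖^2 := by
      rw [real_inner_self_eq_norm_sq, norm_sub_rev]
    have h4 : ⟪ηy • grady f x y, y - y'⟫ = -(ηy * ⟪grady f x y, y' - y⟫) := by
      rw [real_inner_smul_left, show y - y' = -(y' - y) from by abel, inner_neg_right]
      ring
    rw [h3, h4] at hproj0
    linarith
  -- inner product error bounds
  have habs : ∀ w : EuclideanSpace ℝ (Fin d2), ∀ c : ℝ, ‖w‖ ≤ c →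
      |⟪w, y' - y⟫| ≤ c * ‖y' - y‖ := by
    intro w c hc
    calc |⟪w, y' - y⟫| ≤ ‖w‖ * ‖y' - y‖ := abs_real_inner_le_norm _ _
      _ ≤ c * ‖y' - y‖ := mul_le_mul_of_nonneg_right hc (norm_nonneg _)
  have hB1 : |⟪grady f x' y - grady f x y, y' - y⟫| ≤ l * (ηx * ‖g‖) * ‖y' - y‖ := by
    refine habs _ _ ?_
    have h := gy_lip_x x' x y
    rw [hnormxd] at h
    linarith
  -- gradient of fhat in x
  have hGrad : ∀ (y₀ : EuclideanSpace ℝ (Fin d2)) (u : EuclideanSpace ℝ (Fin d1)),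
      HasGradientAt (fun w => fhat f (2*l) w y₀ z) (gradx f u y₀ + (2*l) • (u - z)) u := by
    intro y₀ u
    have h1 : HasGradientAt (fun w => f w y₀) (gradx f u y₀) u :=
      (hdx y₀ u).hasGradientAt
    have h2 := hasGradientAt_quad (2*l) z u
    have h3 := h1.hasFDerivAt.add h2.hasFDerivAt
    rw [← map_add] at h3
    exact h3
  -- first-order condition at the minimizer
  have hG0 : gradx f (xstar y' z) y' + (2*l) • (xstar y' z - z) = 0 := by
    have hlm : IsLocalMin (fun u => fhat f (2*l) u y' z) (xstar y' z) :=
      Filter.Eventually.of_forall (fun u => hxstar y' z u)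
    have hfd := hlm.fderiv_eq_zero
    have hgr := (hGrad y' (xstar y' z)).hasFDerivAt.fderiv
    rw [hfd] at hgr
    have h := congrArg (InnerProductSpace.toDual ℝ (EuclideanSpace ℝ (Fin d1))).symm hgr
    simpa using h.symm
  -- bound on the distance to the minimizer
  have hb2 : ‖gradx f x y' + (2*l) • (x - z)‖ ≤ ‖g‖ + l * ‖y' - y‖ := by
    have hrw : gradx f x y' + (2*l) • (x - z) = g + (gradx f x y' - gradx f x y) := by
      rw [hg]; abel
    rw [hrw]
    refine (norm_add_le _ _).trans ?_
    have h := gx_lip_y x y' y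
    linarith
  have hb1 : l * ‖x - xstar y' z‖ ≤ ‖gradx f x y' + (2*l) • (x - z)‖ := by
    have hGx : gradx f x y' + (2*l) • (x - z)
        = (gradx f x y' - gradx f (xstar y' z) y') + (2*l) • (x - xstar y' z) := by
      linear_combination (norm := module) hG0
    have hin : ⟪gradx f x y' + (2*l) • (x - z), x - xstar y' z⟫
        = ⟪gradx f x y' - gradx f (xstar y' z) y', x - xstar y' z⟫
          + (2*l) * ‖x - xstar y' z‖^2 := by
      rw [hGx, inner_add_left, real_inner_smul_left, real_inner_self_eq_norm_sq]
    have hcs1 : |⟪gradx f x y' - gradx f (xstar y' z) y', x - xstar y' z⟫|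
        ≤ (l * ‖x - xstar y' z‖) * ‖x - xstar y' z‖ := by
      calc |⟪gradx f x y' - gradx f (xstar y' z) y', x - xstar y' z⟫|
          ≤ ‖gradx f x y' - gradx f (xstar y' z) y'‖ * ‖x - xstar y' z‖ :=
            abs_real_inner_le_norm _ _
        _ ≤ (l * ‖x - xstar y' z‖) * ‖x - xstar y' z‖ :=
            mul_le_mul_of_nonneg_right (gx_lip_x x (xstar y' z) y') (norm_nonneg _)
    have hcs2 : ⟪gradx f x y' + (2*l) • (x - z), x - xstar y' z⟫
        ≤ ‖gradx f x y' + (2*l) • (x - z)‖ * ‖x - xstar y' z‖ := real_inner_le_norm _ _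
    rcases eq_or_lt_of_le (norm_nonneg (x - xstar y' z)) with h0 | h0
    · rw [← h0, mul_zero]; positivity
    · have hlow : l * ‖x - xstar y' z‖^2 ≤ ⟪gradx f x y' + (2*l) • (x - z), x - xstar y' z⟫ := by
        nlinarith [(abs_le.1 hcs1).1, hin]
      exact le_of_mul_le_mul_right (by nlinarith [hlow, hcs2]) h0
  have hB2 : |⟪grady f (xstar y' z) y - grady f x y, y' - y⟫|
      ≤ (‖g‖ + l * ‖y' - y‖) * ‖y' - y‖ := by
    refine habs _ _ ?_
    have h1 := gy_lip_x (xstar y' z) x y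
    have h2 : l * ‖xstar y' z - x‖ ≤ ‖g‖ + l * ‖y' - y‖ := by
      rw [norm_sub_rev]; exact hb1.trans hb2
    linarith
  -- inner product splittings
  have hs1 : ⟪grady f x' y - grady f x y, y' - y⟫
      = ⟪grady f x' y, y' - y⟫ - ⟪grady f x y, y' - y⟫ := inner_sub_left _ _ _
  have hs2 : ⟪grady f (xstar y' z) y - grady f x y, y' - y⟫
      = ⟪grady f (xstar y' z) y, y' - y⟫ - ⟪grady f x y, y' - y⟫ := inner_sub_left _ _ _
  -- final assembly
  rw [hηy] at hF6 ⊢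
  have main := final_numeric l ηx ‖g‖ ‖y' - y‖
    (fhat f (2*l) x y z - fhat f (2*l) x' y z)
    (fhat f (2*l) x' y z - fhat f (2*l) x' y' z)
    (fhat f (2*l) (xstar y' z) y' z - fhat f (2*l) (xstar y z) y z)
    ⟪grady f x y, y' - y⟫
    ⟪grady f x' y - grady f x y, y' - y⟫
    ⟪grady f (xstar y' z) y - grady f x y, y' - y⟫
    hl hηx hlηx (norm_nonneg _) (norm_nonneg _)
    e1 (by linarith [e2, hs1]) (by linarith [e3, hs2]) hF6 hB1 (by
      have := hB2; nlinarith [hB2])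
  linarith [main]
end

section
/- Let p = 2l, 0 < η_x ≤ 1/(1000l), η_y = η_x/256, and 0 < β ≤ η_y·l/80000. Given x, z ∈ ℝ^{d1} and y ∈ ℝ^{d2}, set x' := x − η_x(∇_x f(x,y) + p(x − z)), y' := y + η_y∇_y f(x,y), z' := z + β(x' − z). Then V(x,y,z) − V(x',y',z') ≥ (η_x/32)‖∇_x f̂(x,y,z)‖² + (η_y/32)‖∇_y f(x,y)‖² + (pβ/16)‖x − z‖² − 24pβ‖x*(z) − x*(y,z)‖². -/
open Set Metric
open scoped RealInnerProductSpace

section Aux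
variable {d1 d2 : ℕ} {f : EuclideanSpace ℝ (Fin d1) → EuclideanSpace ℝ (Fin d2) → ℝ}

lemma inner_gradient' {E : Type*} [NormedAddCommGroup E] [InnerProductSpace ℝ E] [CompleteSpace E]
    (s : E → ℝ) (x u : E) (L : E →L[ℝ] ℝ) (h : HasFDerivAt s L x) :
    ⟪gradient s x, u⟫ = L u := by
  rw [h.hasGradientAt.gradient]
  exact InnerProductSpace.toDual_symm_apply

lemma path_hasDerivAt'
    (hf : Differentiable ℝ (fun w : EuclideanSpace ℝ (Fin d1) × EuclideanSpace ℝ (Fin d2) => f w.1 w.2))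
    (x u : EuclideanSpace ℝ (Fin d1)) (y v : EuclideanSpace ℝ (Fin d2)) (t : ℝ) :
    HasDerivAt (fun t : ℝ => f (x + t • u) (y + t • v))
      (⟪gradx f (x + t • u) (y + t • v), u⟫ + ⟪grady f (x + t • u) (y + t • v), v⟫) t := by
  set F : EuclideanSpace ℝ (Fin d1) × EuclideanSpace ℝ (Fin d2) → ℝ := fun w => f w.1 w.2 with hF
  set w : EuclideanSpace ℝ (Fin d1) × EuclideanSpace ℝ (Fin d2) := (x + t • u, y + t • v) with hw
  have hFw : HasFDerivAt F (fderiv ℝ F w) w := (hf w).hasFDerivAt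
  have hpath : HasDerivAt (fun s : ℝ => ((x + s • u, y + s • v) : EuclideanSpace ℝ (Fin d1) × EuclideanSpace ℝ (Fin d2))) (u, v) t := by
    apply HasDerivAt.prodMk
    · simpa using ((hasDerivAt_id t).smul_const u).const_add x
    · simpa using ((hasDerivAt_id t).smul_const v).const_add y
  have hcomp := hFw.comp_hasDerivAt t hpath
  have h1 : fderiv ℝ F w (u, 0) = ⟪gradx f (x + t • u) (y + t • v), u⟫ := by
    have hsec : HasFDerivAt (fun x' => f x' w.2) ((fderiv ℝ F w).comp (ContinuousLinearMap.inl ℝ _ _)) w.1 :=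
      by have h := (hFw : HasFDerivAt F (fderiv ℝ F w) (w.1, w.2)).comp w.1 (hasFDerivAt_prodMk_left (𝕜 := ℝ) w.1 w.2); exact h
    exact (inner_gradient' _ _ u _ hsec).symm
  have h2 : fderiv ℝ F w (0, v) = ⟪grady f (x + t • u) (y + t • v), v⟫ := by
    have hsec : HasFDerivAt (fun y' => f w.1 y') ((fderiv ℝ F w).comp (ContinuousLinearMap.inr ℝ _ _)) w.2 :=
      hFw.comp w.2 (hasFDerivAt_prodMk_right (𝕜 := ℝ) w.1 w.2)
    exact (inner_gradient' _ _ v _ hsec).symm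
  have h3 : fderiv ℝ F w (u, v) = fderiv ℝ F w (u, 0) + fderiv ℝ F w (0, v) := by
    rw [← map_add]; norm_num
  rw [← h1, ← h2, ← h3]
  exact hcomp

lemma taylor1d (φ dφ : ℝ → ℝ) (hφ : ∀ t, HasDerivAt φ (dφ t) t) (C : ℝ)
    (hC : ∀ t ∈ Icc (0:ℝ) 1, |dφ t - dφ 0| ≤ C * t) :
    |φ 1 - φ 0 - dφ 0| ≤ C / 2 := by
  have key : ∀ s : ℝ, (∀ t ∈ Icc (0:ℝ) 1, s * (dφ t - dφ 0) ≤ C * t) →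
      s * (φ 1 - φ 0 - dφ 0) ≤ C / 2 := by
    intro s hs
    set ψ : ℝ → ℝ := fun t => s * (φ t - t * dφ 0) - C * t ^ 2 / 2 with hψ
    have hd : ∀ t : ℝ, HasDerivAt ψ (s * (dφ t - dφ 0) - C * t) t := by
      intro t
      have h1 : HasDerivAt (fun t : ℝ => φ t - t * dφ 0) (dφ t - dφ 0) t := by
        have h := (hφ t).sub ((hasDerivAt_id' t).mul_const (dφ 0))
        rw [one_mul] at h
        exact h
      have h2 : HasDerivAt (fun t : ℝ => C * t ^ 2 / 2) (C * t) t := by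
        have := ((hasDerivAt_pow 2 t).const_mul C).div_const 2
        simpa using this.congr_deriv (by ring)
      exact (h1.const_mul s).sub h2
    have hanti : AntitoneOn ψ (Icc (0:ℝ) 1) := by
      apply antitoneOn_of_deriv_nonpos (convex_Icc 0 1)
      · exact fun t _ => ((hd t).continuousAt.continuousWithinAt)
      · exact fun t ht => ((hd t).differentiableAt.differentiableWithinAt)
      · intro t ht
        rw [(hd t).deriv]
        have ht' : t ∈ Icc (0:ℝ) 1 := by
          rw [interior_Icc] at ht; exact ⟨le_of_lt ht.1, le_of_lt ht.2⟩
        linarith [hs t ht']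
    have := hanti (by norm_num : (0:ℝ) ∈ Icc (0:ℝ) 1) (by norm_num : (1:ℝ) ∈ Icc (0:ℝ) 1) zero_le_one
    simp only [hψ] at this
    nlinarith [this]
  have hC0 : 0 ≤ C := by have := hC 1 (by norm_num); nlinarith [abs_nonneg (dφ 1 - dφ 0)]
  rw [abs_le]
  constructor
  · have := key (-1) (fun t ht => by have := hC t ht; have := abs_le.1 this; nlinarith)
    linarith
  · have := key 1 (fun t ht => by have := hC t ht; have := abs_le.1 this; nlinarith)
    linarith

lemma mvt1d (φ dφ : ℝ → ℝ) (hφ : ∀ t, HasDerivAt φ (dφ t) t) (C : ℝ)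
    (hC : ∀ t ∈ Icc (0:ℝ) 1, |dφ t| ≤ C) :
    |φ 1 - φ 0| ≤ C := by
  have key : ∀ s : ℝ, (∀ t ∈ Icc (0:ℝ) 1, s * dφ t ≤ C) → s * (φ 1 - φ 0) ≤ C := by
    intro s hs
    set ψ : ℝ → ℝ := fun t => s * φ t - C * t with hψ
    have hd : ∀ t : ℝ, HasDerivAt ψ (s * dφ t - C) t := fun t => by
      have h := ((hφ t).const_mul s).sub ((hasDerivAt_id' t).const_mul C)
      rw [mul_one] at h
      exact h
    have hanti : AntitoneOn ψ (Icc (0:ℝ) 1) := by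
      apply antitoneOn_of_deriv_nonpos (convex_Icc 0 1)
      · exact fun t _ => ((hd t).continuousAt.continuousWithinAt)
      · exact fun t ht => ((hd t).differentiableAt.differentiableWithinAt)
      · intro t ht
        rw [(hd t).deriv]
        have ht' : t ∈ Icc (0:ℝ) 1 := by
          rw [interior_Icc] at ht; exact ⟨le_of_lt ht.1, le_of_lt ht.2⟩
        linarith [hs t ht']
    have := hanti (by norm_num : (0:ℝ) ∈ Icc (0:ℝ) 1) (by norm_num : (1:ℝ) ∈ Icc (0:ℝ) 1) zero_le_one
    simp only [hψ] at this
    linarith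
  rw [abs_le]
  constructor
  · have := key (-1) (fun t ht => by have := abs_le.1 (hC t ht); linarith)
    linarith
  · have := key 1 (fun t ht => by have := abs_le.1 (hC t ht); linarith)
    linarith

lemma cs2 (A B U V m : ℝ) (hU : 0 ≤ U) (hV : 0 ≤ V) (hm : 0 ≤ m)
    (h : A^2 + B^2 ≤ m^2 * (U^2+V^2)) : A*U+B*V ≤ m*(U^2+V^2) := by
  have h1 : (A*U+B*V)^2 ≤ (m*(U^2+V^2))^2 := by
    nlinarith [sq_nonneg (A*V-B*U), sq_nonneg (U^2-V^2), sq_nonneg U, sq_nonneg V]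
  exact le_of_pow_le_pow_left₀ (by norm_num) (by positivity) h1

/-- Two-sided descent lemma. -/
lemma descent {l : ℝ} (hf : IsLSmooth l f) (hl : 0 ≤ l)
    (x1 x2 : EuclideanSpace ℝ (Fin d1)) (y1 y2 : EuclideanSpace ℝ (Fin d2)) :
    |f x2 y2 - f x1 y1 - ⟪gradx f x1 y1, x2 - x1⟫ - ⟪grady f x1 y1, y2 - y1⟫|
      ≤ l / 2 * (‖x2 - x1‖ ^ 2 + ‖y2 - y1‖ ^ 2) := by
  set u := x2 - x1 with hu
  set v := y2 - y1 with hv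
  set φ : ℝ → ℝ := fun t => f (x1 + t • u) (y1 + t • v) with hφdef
  set dφ : ℝ → ℝ := fun t =>
    ⟪gradx f (x1 + t • u) (y1 + t • v), u⟫ + ⟪grady f (x1 + t • u) (y1 + t • v), v⟫ with hdφ
  have hder : ∀ t, HasDerivAt φ (dφ t) t := fun t => path_hasDerivAt' hf.1 x1 u y1 v t
  have hbound : ∀ t ∈ Icc (0:ℝ) 1, |dφ t - dφ 0| ≤ (l * (‖u‖ ^ 2 + ‖v‖ ^ 2)) * t := by
    intro t ht
    set xt := x1 + t • u
    set yt := y1 + t • v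
    have h0 : x1 + (0:ℝ) • u = x1 := by simp
    have h0' : y1 + (0:ℝ) • v = y1 := by simp
    have hdiff : dφ t - dφ 0 =
        ⟪gradx f xt yt - gradx f x1 y1, u⟫ + ⟪grady f xt yt - grady f x1 y1, v⟫ := by
      simp only [hdφ, h0, h0', inner_sub_left]
      ring
    rw [hdiff]
    have hlip := hf.2 xt x1 yt y1
    have hxn : ‖xt - x1‖ = t * ‖u‖ := by
      simp [xt, norm_smul, abs_of_nonneg ht.1]
    have hyn : ‖yt - y1‖ = t * ‖v‖ := by
      simp [yt, norm_smul, abs_of_nonneg ht.1]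
    rw [hxn, hyn] at hlip
    have hA := norm_inner_le_norm (𝕜 := ℝ) (gradx f xt yt - gradx f x1 y1) u
    have hB := norm_inner_le_norm (𝕜 := ℝ) (grady f xt yt - grady f x1 y1) v
    have habs : |⟪gradx f xt yt - gradx f x1 y1, u⟫ + ⟪grady f xt yt - grady f x1 y1, v⟫|
        ≤ ‖gradx f xt yt - gradx f x1 y1‖ * ‖u‖ + ‖grady f xt yt - grady f x1 y1‖ * ‖v‖ := by
      calc _ ≤ |⟪gradx f xt yt - gradx f x1 y1, u⟫| + |⟪grady f xt yt - grady f x1 y1, v⟫| :=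
            abs_add_le _ _
        _ ≤ _ := add_le_add hA hB
    refine habs.trans ?_
    have := cs2 ‖gradx f xt yt - gradx f x1 y1‖ ‖grady f xt yt - grady f x1 y1‖ ‖u‖ ‖v‖ (l * t)
      (norm_nonneg _) (norm_nonneg _) (mul_nonneg hl ht.1) (by nlinarith [hlip])
    nlinarith [this]
  have := taylor1d φ dφ hder (l * (‖u‖ ^ 2 + ‖v‖ ^ 2)) hbound
  have hφ1 : φ 1 = f x2 y2 := by simp [hφdef, hu, hv]
  have hφ0 : φ 0 = f x1 y1 := by simp [hφdef]
  have hdφ0 : dφ 0 = ⟪gradx f x1 y1, u⟫ + ⟪grady f x1 y1, v⟫ := by simp [hdφ]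
  rw [hφ1, hφ0, hdφ0] at this
  have habs := abs_le.1 this
  rw [abs_le]
  constructor <;> [skip; skip] <;> nlinarith [habs.1, habs.2]

end Aux
section Aux2
variable {d1 d2 : ℕ} {f : EuclideanSpace ℝ (Fin d1) → EuclideanSpace ℝ (Fin d2) → ℝ} {l : ℝ}

/-- Sandwich expansion for `fhat` in `x`. -/
lemma fhat_sandwich (hf : IsLSmooth l f) (hl : 0 ≤ l)
    (x1 x2 z : EuclideanSpace ℝ (Fin d1)) (y : EuclideanSpace ℝ (Fin d2)) :
    |fhat f (2*l) x2 y z - fhat f (2*l) x1 y z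
      - ⟪gradx f x1 y + (2*l) • (x1 - z), x2 - x1⟫ - l * ‖x2 - x1‖ ^ 2|
      ≤ l / 2 * ‖x2 - x1‖ ^ 2 := by
  have hd := descent hf hl x1 x2 y y
  simp only [sub_self, norm_zero] at hd
  have hq : ‖x2 - z‖^2 = ‖x1 - z‖^2 + 2 * ⟪x1 - z, x2 - x1⟫ + ‖x2 - x1‖^2 := by
    have := norm_add_sq_real (x1 - z) (x2 - x1)
    have h : x1 - z + (x2 - x1) = x2 - z := by abel
    rw [h] at this; linarith
  have hG : ⟪gradx f x1 y + (2*l) • (x1 - z), x2 - x1⟫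
      = ⟪gradx f x1 y, x2 - x1⟫ + 2*l*⟪x1 - z, x2 - x1⟫ := by
    rw [inner_add_left, real_inner_smul_left]
  rw [inner_zero_right] at hd
  simp only [fhat]
  have habs := abs_le.1 hd
  rw [abs_le]
  constructor <;> [skip; skip] <;> nlinarith [habs.1, habs.2, hq, hG]

/-- Lower strong-convexity bound. -/
lemma fhat_lower (hf : IsLSmooth l f) (hl : 0 ≤ l)
    (x1 x2 z : EuclideanSpace ℝ (Fin d1)) (y : EuclideanSpace ℝ (Fin d2)) :
    fhat f (2*l) x1 y z + ⟪gradx f x1 y + (2*l) • (x1 - z), x2 - x1⟫ + l/2 * ‖x2 - x1‖ ^ 2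
      ≤ fhat f (2*l) x2 y z := by
  have := (abs_le.1 (fhat_sandwich hf hl x1 x2 z y)).1
  nlinarith [this]

/-- Upper smoothness bound. -/
lemma fhat_upper (hf : IsLSmooth l f) (hl : 0 ≤ l)
    (x1 x2 z : EuclideanSpace ℝ (Fin d1)) (y : EuclideanSpace ℝ (Fin d2)) :
    fhat f (2*l) x2 y z ≤
      fhat f (2*l) x1 y z + ⟪gradx f x1 y + (2*l) • (x1 - z), x2 - x1⟫ + 3*l/2 * ‖x2 - x1‖ ^ 2 := by
  have := (abs_le.1 (fhat_sandwich hf hl x1 x2 z y)).2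
  nlinarith [this]

/-- Quadratic growth at the minimizer. -/
lemma fhat_growth (hf : IsLSmooth l f) (hl : 0 ≤ l)
    (xstar : EuclideanSpace ℝ (Fin d2) → EuclideanSpace ℝ (Fin d1) → EuclideanSpace ℝ (Fin d1))
    (hxstar : ∀ y z x, fhat f (2 * l) (xstar y z) y z ≤ fhat f (2 * l) x y z)
    (y : EuclideanSpace ℝ (Fin d2)) (z x : EuclideanSpace ℝ (Fin d1)) :
    fhat f (2*l) (xstar y z) y z + l/4 * ‖x - xstar y z‖ ^ 2 ≤ fhat f (2*l) x y z := by
  set a := xstar y z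
  set m : EuclideanSpace ℝ (Fin d1) := (2:ℝ)⁻¹ • (a + x) with hm
  have h1 := fhat_lower hf hl m a z y
  have h2 := fhat_lower hf hl m x z y
  have ham : a - m = (2:ℝ)⁻¹ • (a - x) := by rw [hm]; module
  have hxm : x - m = -((2:ℝ)⁻¹ • (a - x)) := by rw [hm]; module
  have hsum : ⟪gradx f m y + (2*l) • (m - z), a - m⟫ + ⟪gradx f m y + (2*l) • (m - z), x - m⟫ = 0 := by
    rw [ham, hxm, inner_neg_right]; ring
  have hnm : ‖a - m‖ ^ 2 = ‖a - x‖^2 / 4 := by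
    rw [ham, norm_smul]; simp; ring
  have hnm' : ‖x - m‖ ^ 2 = ‖a - x‖^2 / 4 := by
    rw [hxm, norm_neg, norm_smul]; simp; ring
  have hmin := hxstar y z m
  have hax : ‖x - a‖ = ‖a - x‖ := by rw [← norm_neg]; congr 1; abel
  rw [hax]
  nlinarith [h1, h2, hsum, hnm, hnm', hmin]

/-- Error bound: distance to minimizer controlled by gradient norm. -/
lemma fhat_errbound (hf : IsLSmooth l f) (hl : 0 < l)
    (xstar : EuclideanSpace ℝ (Fin d2) → EuclideanSpace ℝ (Fin d1) → EuclideanSpace ℝ (Fin d1))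
    (hxstar : ∀ y z x, fhat f (2 * l) (xstar y z) y z ≤ fhat f (2 * l) x y z)
    (y : EuclideanSpace ℝ (Fin d2)) (z x : EuclideanSpace ℝ (Fin d1)) :
    ‖x - xstar y z‖ ≤ 2 / l * ‖gradx f x y + (2*l) • (x - z)‖ := by
  set a := xstar y z
  have h1 := fhat_lower hf hl.le x a z y
  have hmin := hxstar y z x
  have hcs : -⟪gradx f x y + (2*l) • (x - z), a - x⟫ ≤ ‖gradx f x y + (2*l) • (x - z)‖ * ‖a - x‖ := by
    have := abs_real_inner_le_norm (gradx f x y + (2*l) • (x - z)) (a - x)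
    have := abs_le.1 this
    linarith [this.1]
  have hax : ‖x - a‖ = ‖a - x‖ := by rw [← norm_neg]; congr 1; abel
  rw [hax]
  rcases eq_or_lt_of_le (norm_nonneg (a - x)) with h0 | h0
  · rw [← h0]; positivity
  · have : l/2 * ‖a - x‖^2 ≤ ‖gradx f x y + (2*l) • (x - z)‖ * ‖a - x‖ := by nlinarith
    rw [div_mul_eq_mul_div, le_div_iff₀ hl]
    nlinarith [this, h0]

end Aux2
section Aux3
variable {d1 d2 : ℕ} {f : EuclideanSpace ℝ (Fin d1) → EuclideanSpace ℝ (Fin d2) → ℝ} {l : ℝ}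

lemma sq_le_imp_s13 {A m : ℝ} (hm : 0 ≤ m) (h : A^2 ≤ m^2) : A ≤ m := by
  nlinarith [sq_nonneg (A - m), sq_nonneg (A + m)]

lemma grady_lip (hf : IsLSmooth l f) (hl : 0 ≤ l)
    (x1 x2 : EuclideanSpace ℝ (Fin d1)) (y : EuclideanSpace ℝ (Fin d2)) :
    ‖grady f x1 y - grady f x2 y‖ ≤ l * ‖x1 - x2‖ := by
  have := hf.2 x1 x2 y y
  simp only [sub_self, norm_zero] at this
  refine sq_le_imp_s13 (by positivity) ?_
  nlinarith [norm_nonneg (gradx f x1 y - gradx f x2 y), sq_nonneg (l * ‖x1 - x2‖), this]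

lemma gradx_lip_y (hf : IsLSmooth l f) (hl : 0 ≤ l)
    (x : EuclideanSpace ℝ (Fin d1)) (y1 y2 : EuclideanSpace ℝ (Fin d2)) :
    ‖gradx f x y1 - gradx f x y2‖ ≤ l * ‖y1 - y2‖ := by
  have := hf.2 x x y1 y2
  simp only [sub_self, norm_zero] at this
  refine sq_le_imp_s13 (by positivity) ?_
  nlinarith [norm_nonneg (grady f x y1 - grady f x y2), this]

lemma partial_path_x (hf : IsLSmooth l f)
    (a d : EuclideanSpace ℝ (Fin d1)) (y : EuclideanSpace ℝ (Fin d2)) (t : ℝ) :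
    HasDerivAt (fun t : ℝ => f (a + t • d) y) (⟪gradx f (a + t • d) y, d⟫) t := by
  have h := path_hasDerivAt' hf.1 a d y 0 t
  simp only [smul_zero, add_zero, inner_zero_right] at h
  simpa using h

lemma diff_bound_y (hf : IsLSmooth l f) (hl : 0 ≤ l)
    (a b : EuclideanSpace ℝ (Fin d1)) (y y' : EuclideanSpace ℝ (Fin d2)) :
    |(f b y - f b y') - (f a y - f a y')| ≤ l * ‖y - y'‖ * ‖b - a‖ := by
  set d := b - a with hd
  have hder : ∀ t : ℝ, HasDerivAt (fun t : ℝ => f (a + t • d) y - f (a + t • d) y')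
      (⟪gradx f (a + t • d) y - gradx f (a + t • d) y', d⟫) t := by
    intro t
    have h1 := partial_path_x hf a d y t
    have h2 := partial_path_x hf a d y' t
    rw [inner_sub_left]
    exact h1.sub h2
  have hb : ∀ t ∈ Icc (0:ℝ) 1, |⟪gradx f (a + t • d) y - gradx f (a + t • d) y', d⟫|
      ≤ l * ‖y - y'‖ * ‖d‖ := by
    intro t _
    have h1 := abs_real_inner_le_norm (gradx f (a + t • d) y - gradx f (a + t • d) y') d
    have h2 := gradx_lip_y hf hl (a + t • d) y y'
    nlinarith [norm_nonneg d, norm_nonneg (gradx f (a + t • d) y - gradx f (a + t • d) y')]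
  have := mvt1d _ _ hder (l * ‖y - y'‖ * ‖d‖) hb
  have he1 : a + (1:ℝ) • d = b := by rw [hd]; module
  have he0 : a + (0:ℝ) • d = a := by module
  rw [he1, he0] at this
  exact this

lemma xstar_lip_y (hf : IsLSmooth l f) (hl : 0 < l)
    (xstar : EuclideanSpace ℝ (Fin d2) → EuclideanSpace ℝ (Fin d1) → EuclideanSpace ℝ (Fin d1))
    (hxstar : ∀ y z x, fhat f (2 * l) (xstar y z) y z ≤ fhat f (2 * l) x y z)
    (y y' : EuclideanSpace ℝ (Fin d2)) (z : EuclideanSpace ℝ (Fin d1)) :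
    ‖xstar y z - xstar y' z‖ ≤ 2 * ‖y - y'‖ := by
  set a := xstar y z with ha
  set b := xstar y' z with hb
  have g1 := fhat_growth hf hl.le xstar hxstar y z b
  have g2 := fhat_growth hf hl.le xstar hxstar y' z a
  rw [← hb] at g2
  rw [← ha] at g1
  have hab : ‖a - b‖ = ‖b - a‖ := norm_sub_rev a b
  have hdiff1 : fhat f (2*l) b y z - fhat f (2*l) b y' z = f b y - f b y' := by
    simp [fhat]
  have hdiff2 : fhat f (2*l) a y z - fhat f (2*l) a y' z = f a y - f a y' := by
    simp [fhat]
  have hmvt := (abs_le.1 (diff_bound_y hf hl.le a b y y')).2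
  set n := ‖b - a‖ with hn
  have hab2 : l/4 * ‖a - b‖^2 = l/4 * n^2 := by rw [hab]
  have hkey : l/2 * n^2 ≤ l * ‖y - y'‖ * n := by linarith [g1, g2, hdiff1, hdiff2, hmvt, hab2]
  rw [hab]
  have hn0 : 0 ≤ n := hn ▸ norm_nonneg _
  rcases eq_or_lt_of_le hn0 with h0 | h0
  · linarith [norm_nonneg (y - y')]
  · nlinarith [hkey, mul_pos hl h0]

lemma fhat_zshift (x z z' : EuclideanSpace ℝ (Fin d1)) (y : EuclideanSpace ℝ (Fin d2)) :
    fhat f (2*l) x y z' - fhat f (2*l) x y z = 2*l*⟪x - z, z - z'⟫ + l * ‖z - z'‖^2 := by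
  simp only [fhat]
  have h : x - z' = (x - z) + (z - z') := by abel
  rw [h, norm_add_sq_real]
  ring

lemma xstar_lip_z (hf : IsLSmooth l f) (hl : 0 < l)
    (xstar : EuclideanSpace ℝ (Fin d2) → EuclideanSpace ℝ (Fin d1) → EuclideanSpace ℝ (Fin d1))
    (hxstar : ∀ y z x, fhat f (2 * l) (xstar y z) y z ≤ fhat f (2 * l) x y z)
    (y : EuclideanSpace ℝ (Fin d2)) (z z' : EuclideanSpace ℝ (Fin d1)) :
    ‖xstar y z - xstar y z'‖ ≤ 4 * ‖z - z'‖ := by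
  set a := xstar y z with ha
  set b := xstar y z' with hb
  have g1 := fhat_growth hf hl.le xstar hxstar y z b
  have g2 := fhat_growth hf hl.le xstar hxstar y z' a
  rw [← hb] at g2
  rw [← ha] at g1
  have hab : ‖a - b‖ = ‖b - a‖ := norm_sub_rev a b
  have s1 := fhat_zshift (f := f) (l := l) b z z' y
  have s2 := fhat_zshift (f := f) (l := l) a z z' y
  -- (fhat b y z - fhat b y z') - (fhat a y z - fhat a y z') = 2l⟪a - b, z - z'⟫
  have hinner : ⟪a - z, z - z'⟫ - ⟪b - z, z - z'⟫ = ⟪a - b, z - z'⟫ := by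
    rw [← inner_sub_left]; congr 1; abel
  have hcs : ⟪a - b, z - z'⟫ ≤ ‖a - b‖ * ‖z - z'‖ := real_inner_le_norm _ _
  set n := ‖b - a‖ with hn
  have hab2 : l/4 * ‖a - b‖^2 = l/4 * n^2 := by rw [hab]
  have hinner2 : 2*l*⟪a - z, z - z'⟫ - 2*l*⟪b - z, z - z'⟫ ≤ 2*l*(n * ‖z - z'‖) := by
    rw [← hab]; nlinarith [hinner, hcs, hl]
  have hkey : l/2 * n^2 ≤ 2 * l * (n * ‖z - z'‖) := by linarith [g1, g2, s1, s2, hinner2, hab2]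
  rw [hab]
  have hn0 : 0 ≤ n := hn ▸ norm_nonneg _
  rcases eq_or_lt_of_le hn0 with h0 | h0
  · linarith [norm_nonneg (z - z')]
  · nlinarith [hkey, mul_pos hl h0]

end Aux3
section Arith

set_option maxHeartbeats 2000000 in
lemma final_arith (l ηx ηy β A B C C' D E V1 V2 V3 V45 : ℝ)
    (hl : 0 < l) (hηx : 0 < ηx) (hε : l * ηx ≤ 1/1000) (hηy : ηy = ηx / 256)
    (hβ : 0 < β) (hβ' : β ≤ ηy * l / 80000)
    (hA : 0 ≤ A) (hB : 0 ≤ B) (hC : 0 ≤ C) (hC' : 0 ≤ C') (hD : 0 ≤ D) (hE0 : 0 ≤ E)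
    (hE : E ≤ D + 2*ηy*B + 4*β*C') (hCC : C ≤ C' + ηx*A)
    (hm1 : V1 ≥ ηx*A^2 - ηy*B^2 - 3*l/2*(ηx^2*A^2) - l/2*(ηy^2*B^2))
    (hm2 : V2 = 2*l*β*C'^2 - l*β^2*C'^2)
    (hm3 : V3 ≥ ηy*B^2 - 2*l*(ηy^2*B^2) - 2*ηy*(A*B) - l/2*(ηy^2*B^2))
    (hm45 : V45 ≥ -(4*l*β*(E*C'))) :
    V1 + V2 + 2*V3 + V45 ≥ ηx/32*A^2 + ηy/32*B^2 + 2*l*β/16*C^2 - 24*(2*l)*β*D^2 := by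
  have hηy0 : 0 < ηy := by rw [hηy]; positivity
  have hεy : l * ηy ≤ 1/256000 := by rw [hηy]; linarith
  have hβn : β ≤ 1/1000 := by nlinarith [mul_pos hl hηy0]
  have hlβ : (0:ℝ) ≤ l * β := by positivity
  have hC'2 : (0:ℝ) ≤ l*β*C'^2 := by positivity
  have y1 : 4*l*β*(E*C') ≤ 4*l*β*(D*C') + 8*l*β*ηy*(B*C') + 16*l*β*β*C'^2 := by
    have h := mul_le_mul_of_nonneg_left (mul_le_mul_of_nonneg_right hE hC')
      (by positivity : (0:ℝ) ≤ 4*l*β)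
    linarith [h]
  have y2 : 4*l*β*(D*C') ≤ l*β/12*C'^2 + 48*l*β*D^2 := by
    have h := mul_le_mul_of_nonneg_left (sq_nonneg (C' - 24*D)) hlβ
    linarith [h]
  have y3 : 8*l*β*ηy*(B*C') ≤ l*β/2*C'^2 + 32*l*β*(ηy^2*B^2) := by
    have h := mul_le_mul_of_nonneg_left (sq_nonneg (C' - 8*ηy*B)) hlβ
    linarith [h]
  have y4 : 2*(2*ηy*(A*B)) ≤ ηx/8*A^2 + ηy/8*B^2 := by
    rw [hηy]
    have h := mul_nonneg hηx.le (sq_nonneg (A - B/16))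
    linarith [h]
  have y5 : 17*(l*β*β*C'^2) ≤ 1/12*(l*β*C'^2) := by
    have h := mul_le_mul_of_nonneg_left hβn hC'2
    linarith [h, hC'2]
  have y6 : 2/3*(l*β*C^2) ≤ 4/3*(l*β*C'^2) + 4/3*(l*β*(ηx^2*A^2)) := by
    have hsq : C^2 ≤ 2*C'^2 + 2*(ηx^2*A^2) := by
      have t1 : C^2 ≤ (C' + ηx*A)^2 := by
        have := pow_le_pow_left₀ hC hCC 2
        simpa using this
      have t2 : (C' + ηx*A)^2 ≤ 2*C'^2 + 2*(ηx^2*A^2) := by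
        have := sq_nonneg (C' - ηx*A)
        nlinarith [this]
      linarith
    have h := mul_le_mul_of_nonneg_left hsq hlβ
    linarith [h]
  have y7 : 3*l/2*(ηx^2*A^2) ≤ 3/2000*(ηx*A^2) := by
    have h := mul_le_mul_of_nonneg_right hε (by positivity : (0:ℝ) ≤ ηx*A^2)
    linarith [h]
  have y8 : 11/2*(l*(ηy^2*B^2)) ≤ 11/512000*(ηy*B^2) := by
    have h := mul_le_mul_of_nonneg_right hεy (by positivity : (0:ℝ) ≤ ηy*B^2)
    linarith [h]
  have y9 : 32*l*β*(ηy^2*B^2) ≤ 1/8000*(ηy*B^2) := by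
    have h1 := mul_le_mul_of_nonneg_right hεy (by positivity : (0:ℝ) ≤ ηy*B^2)
    have h2 := mul_le_mul_of_nonneg_right hβn
      (by positivity : (0:ℝ) ≤ l*(ηy^2*B^2))
    have h3 := mul_le_mul_of_nonneg_right hβn (by positivity : (0:ℝ) ≤ ηy*B^2)
    nlinarith [h1, h2, h3, hβ.le, mul_nonneg hl.le (mul_nonneg (sq_nonneg ηy) (sq_nonneg B))]
  have y10 : 4/3*(l*β*(ηx^2*A^2)) ≤ 1/1000*(ηx*A^2) := by
    have h1 := mul_le_mul_of_nonneg_right hε (by positivity : (0:ℝ) ≤ ηx*A^2)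
    have h2 := mul_le_mul_of_nonneg_right hβn
      (by positivity : (0:ℝ) ≤ l*(ηx^2*A^2))
    nlinarith [h1, h2, mul_nonneg hl.le (mul_nonneg (sq_nonneg ηx) (sq_nonneg A))]
  have p1 : (0:ℝ) ≤ ηx*A^2 := by positivity
  have p2 : (0:ℝ) ≤ ηy*B^2 := by positivity
  have p3 : (0:ℝ) ≤ l*β*C^2 := by positivity
  linarith [hm1, hm2, hm3, hm45, y1, y2, y3, y4, y5, y6, y7, y8, y9, y10, hC'2, p1, p2, p3]

end Arith
section Shift
variable {d1 d2 : ℕ} {f : EuclideanSpace ℝ (Fin d1) → EuclideanSpace ℝ (Fin d2) → ℝ} {l : ℝ}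

lemma phi_shift (Φ : EuclideanSpace ℝ (Fin d1) → EuclideanSpace ℝ (Fin d1) → ℝ)
    (hΦ : ∀ x z, IsLUB (Set.range fun y => fhat f (2 * l) x y z) (Φ x z))
    (x z z' : EuclideanSpace ℝ (Fin d1)) :
    Φ x z' = Φ x z + (2*l*⟪x - z, z - z'⟫ + l * ‖z - z'‖^2) := by
  set c : ℝ := 2*l*⟪x - z, z - z'⟫ + l * ‖z - z'‖^2 with hc
  have hshift : ∀ y, fhat f (2*l) x y z' = fhat f (2*l) x y z + c :=
    fun y => by have := fhat_zshift (f := f) (l := l) x z z' y; linarith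
  have : IsLUB (Set.range fun y => fhat f (2 * l) x y z') (Φ x z + c) := by
    constructor
    · rintro _ ⟨y, rfl⟩
      have h1 := (hΦ x z).1 ⟨y, rfl⟩
      have := hshift y
      simp only at this ⊢
      linarith
    · intro b hb
      have hub : (Φ x z) ≤ b - c := by
        apply (hΦ x z).2
        rintro _ ⟨y, rfl⟩
        have h1 := hb ⟨y, rfl⟩
        have := hshift y
        simp only at h1 ⊢
        linarith
      linarith
  exact ((hΦ x z').unique this)

end Shift
set_option maxHeartbeats 1000000 in
/-- potential decrease, unconstrained case `Y = ℝ^{d2}`: with `p = 2l`,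
`0 < η_x ≤ 1/(1000l)`, `η_y = η_x/256`, `0 < β ≤ η_y l/80000`, one step
`x' = x − η_x(∇_x f(x,y) + p(x−z))`, `y' = y + η_y ∇_y f(x,y)`, `z' = z + β(x'−z)` of
Smoothed-GDA decreases the potential `V(x,y,z) = f̂(x,y,z) − 2Ψ(y,z) + 2P(z)` by
`(η_x/32)‖∇_x f̂(x,y,z)‖² + (η_y/32)‖∇_y f(x,y)‖² + (pβ/16)‖x−z‖² − 24pβ‖x*(z) − x*(y,z)‖²`. -/
theorem statement13 {d1 d2 : ℕ} (l ηx ηy β : ℝ) (hl : 0 < l)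
    (hηx : 0 < ηx) (hηx' : ηx ≤ 1 / (1000 * l)) (hηy : ηy = ηx / 256)
    (hβ : 0 < β) (hβ' : β ≤ ηy * l / 80000)
    (f : EuclideanSpace ℝ (Fin d1) → EuclideanSpace ℝ (Fin d2) → ℝ)
    (hf : IsLSmooth l f)
    -- `x*(y, z)`: minimizer of `x ↦ f̂(x, y, z)` with `p = 2l`; `Ψ(y,z) = f̂(x*(y,z),y,z)`
    (xstar : EuclideanSpace ℝ (Fin d2) → EuclideanSpace ℝ (Fin d1) → EuclideanSpace ℝ (Fin d1))
    (hxstar : ∀ y z x, fhat f (2 * l) (xstar y z) y z ≤ fhat f (2 * l) x y z)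
    -- `Φ(x,z) = sup_{y} f̂(x,y,z)` is finite, with minimizer `x*(z)` in `x`
    (Φ : EuclideanSpace ℝ (Fin d1) → EuclideanSpace ℝ (Fin d1) → ℝ)
    (hΦ : ∀ x z, IsLUB (Set.range fun y => fhat f (2 * l) x y z) (Φ x z))
    (xstarz : EuclideanSpace ℝ (Fin d1) → EuclideanSpace ℝ (Fin d1))
    (hxstarz : ∀ z x, Φ (xstarz z) z ≤ Φ x z)
    -- minimax regularity: `P(z) = sup_y Ψ(y,z)` is attained at `ŷ*(z)`,
    -- `P(z) = min_x Φ(x,z)` and `x*(ŷ*(z),z) = x*(z)`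
    (P : EuclideanSpace ℝ (Fin d1) → ℝ)
    (yhat : EuclideanSpace ℝ (Fin d1) → EuclideanSpace ℝ (Fin d2))
    (hP : ∀ z, IsLUB (Set.range fun y => fhat f (2 * l) (xstar y z) y z) (P z))
    (hyhat : ∀ z, fhat f (2 * l) (xstar (yhat z) z) (yhat z) z = P z)
    (hminimax : ∀ z, P z = Φ (xstarz z) z)
    (hxyhat : ∀ z, xstar (yhat z) z = xstarz z)
    -- one step of Smoothed-GDA
    (x z : EuclideanSpace ℝ (Fin d1)) (y : EuclideanSpace ℝ (Fin d2))
    (x' z' : EuclideanSpace ℝ (Fin d1)) (y' : EuclideanSpace ℝ (Fin d2))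
    (hx' : x' = x - ηx • (gradx f x y + (2 * l) • (x - z)))
    (hy' : y' = y + ηy • grady f x y)
    (hz' : z' = z + β • (x' - z)) :
    (fhat f (2 * l) x y z - 2 * fhat f (2 * l) (xstar y z) y z + 2 * P z)
        - (fhat f (2 * l) x' y' z' - 2 * fhat f (2 * l) (xstar y' z') y' z' + 2 * P z')
      ≥ ηx / 32 * ‖gradx f x y + (2 * l) • (x - z)‖ ^ 2
        + ηy / 32 * ‖grady f x y‖ ^ 2
        + (2 * l) * β / 16 * ‖x - z‖ ^ 2
        - 24 * (2 * l) * β * ‖xstarz z - xstar y z‖ ^ 2 := by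
  have h2l : (0:ℝ) ≤ l := hl.le
  have hηy0 : 0 < ηy := by rw [hηy]; positivity
  have hε : l * ηx ≤ 1/1000 := by
    have h1000 : (0:ℝ) < 1000 * l := by positivity
    have := (le_div_iff₀ h1000).1 hηx'
    linarith [this]
  set Gx := gradx f x y + (2 * l) • (x - z) with hGxdef
  set gy := grady f x y with hgydef
  set A := ‖Gx‖ with hA
  set B := ‖gy‖ with hB
  set C := ‖x - z‖ with hC
  set C' := ‖x' - z‖ with hC'
  set D := ‖xstarz z - xstar y z‖ with hD
  set E := ‖xstarz z - xstar y' z'‖ with hE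
  have hA0 : 0 ≤ A := hA ▸ norm_nonneg _
  have hB0 : 0 ≤ B := hB ▸ norm_nonneg _
  have hC0 : 0 ≤ C := hC ▸ norm_nonneg _
  have hC'0 : 0 ≤ C' := hC' ▸ norm_nonneg _
  have hD0 : 0 ≤ D := hD ▸ norm_nonneg _
  have hE0 : 0 ≤ E := hE ▸ norm_nonneg _
  -- step displacement facts
  have hx'x : x' - x = -(ηx • Gx) := by rw [hx']; abel
  have hnx'x : ‖x' - x‖ = ηx * A := by
    rw [hx'x, norm_neg, norm_smul, Real.norm_eq_abs, abs_of_pos hηx]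
  have hy'y : y' - y = ηy • gy := by rw [hy']; abel
  have hny'y : ‖y' - y‖ = ηy * B := by
    rw [hy'y, norm_smul, Real.norm_eq_abs, abs_of_pos hηy0]
  have hz'z : z' - z = β • (x' - z) := by rw [hz']; abel
  have hnz'z : ‖z' - z‖ = β * C' := by
    rw [hz'z, norm_smul, Real.norm_eq_abs, abs_of_pos hβ]
  have hzz' : z - z' = -(β • (x' - z)) := by rw [hz']; abel
  -- m1 : joint primal descent
  have m1 : fhat f (2*l) x y z - fhat f (2*l) x' y' z
      ≥ ηx*A^2 - ηy*B^2 - 3*l/2*(ηx^2*A^2) - l/2*(ηy^2*B^2) := by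
    have hd := descent hf h2l x x' y y'
    have hsq1 : ‖x' - x‖^2 = ηx^2*A^2 := by rw [hnx'x]; ring
    have hsq2 : ‖y' - y‖^2 = ηy^2*B^2 := by rw [hny'y]; ring
    rw [hsq1, hsq2] at hd
    have i1 : ⟪gradx f x y, x' - x⟫ = -(ηx * ⟪gradx f x y, Gx⟫) := by
      rw [hx'x, inner_neg_right, real_inner_smul_right]
    have i2 : ⟪gy, y' - y⟫ = ηy * B^2 := by
      rw [hy'y, real_inner_smul_right, real_inner_self_eq_norm_sq]
    have i4 : ηx*(⟪gradx f x y, Gx⟫ + 2*l*⟪x - z, Gx⟫) = ηx*A^2 := by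
      have h' : ⟪Gx, Gx⟫ = ⟪gradx f x y, Gx⟫ + 2*l*⟪x - z, Gx⟫ := by
        rw [hGxdef, inner_add_left, real_inner_smul_left]
      rw [← h', real_inner_self_eq_norm_sq]
    have i5 : ‖x' - z‖^2 = ‖x - z‖^2 + 2*⟪x - z, x' - x⟫ + ‖x' - x‖^2 := by
      have h := norm_add_sq_real (x - z) (x' - x)
      have he : x - z + (x' - x) = x' - z := by abel
      rw [he] at h; linarith
    have i6 : ⟪x - z, x' - x⟫ = -(ηx * ⟪x - z, Gx⟫) := by
      rw [hx'x, inner_neg_right, real_inner_smul_right]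
    have hsq1' : ‖x' - x‖^2 = ηx^2*A^2 := by rw [hnx'x]; ring
    have habs := abs_le.1 hd
    simp only [fhat]
    have hfin : l * ‖x' - z‖^2 - l * ‖x - z‖^2
        = -(2*l*(ηx*⟪x - z, Gx⟫)) + l*(ηx^2*A^2) := by
      rw [i5, hsq1', i6]; ring
    linarith [habs.1, habs.2, i1, i2, i4, hfin]
  -- m2 : z-step exact change
  have m2 : fhat f (2*l) x' y' z - fhat f (2*l) x' y' z'
      = 2*l*β*C'^2 - l*β^2*C'^2 := by
    have hs := fhat_zshift (f := f) (l := l) x' z z' y'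
    have j1 : ⟪x' - z, z - z'⟫ = -(β * C'^2) := by
      rw [hzz', inner_neg_right, real_inner_smul_right, real_inner_self_eq_norm_sq]
    have j2 : ‖z - z'‖^2 = β^2*C'^2 := by
      rw [norm_sub_rev, hnz'z]; ring
    rw [j1, j2] at hs
    linarith
  -- m3 : dual ascent
  have m3 : fhat f (2*l) (xstar y' z) y' z - fhat f (2*l) (xstar y z) y z
      ≥ ηy*B^2 - 2*l*(ηy^2*B^2) - 2*ηy*(A*B) - l/2*(ηy^2*B^2) := by
    set xp := xstar y' z with hxp
    have k0 : fhat f (2*l) (xstar y z) y z ≤ fhat f (2*l) xp y z := hxstar y z xp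
    have hd2 := descent hf h2l xp xp y y'
    simp only [sub_self, inner_zero_right, norm_zero] at hd2
    have hsq2 : ‖y' - y‖^2 = ηy^2*B^2 := by rw [hny'y]; ring
    rw [hsq2] at hd2
    have k2 : ⟪grady f xp y, y' - y⟫ = ηy * ⟪grady f xp y, gy⟫ := by
      rw [hy'y, real_inner_smul_right]
    have k3 : B^2 - ‖grady f xp y - gy‖ * B ≤ ⟪grady f xp y, gy⟫ := by
      have hid : ⟪grady f xp y, gy⟫ = ⟪gy, gy⟫ + ⟪grady f xp y - gy, gy⟫ := by
        rw [← inner_add_left]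
        congr 1
        abel
      have hcs := (abs_le.1 (abs_real_inner_le_norm (grady f xp y - gy) gy)).1
      have hself : ⟪gy, gy⟫ = B^2 := by rw [real_inner_self_eq_norm_sq]
      rw [hid, hself]
      have : ‖gy‖ = B := rfl
      rw [this] at hcs
      linarith
    have k4 : ‖grady f xp y - gy‖ ≤ l * ‖xp - x‖ := grady_lip hf h2l xp x y
    have tri : ‖xp - x‖ ≤ ‖xp - xstar y z‖ + ‖xstar y z - x‖ := by
      have := dist_triangle xp (xstar y z) x
      simpa [dist_eq_norm] using this
    have lipy : ‖xp - xstar y z‖ ≤ 2 * (ηy*B) := by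
      have := xstar_lip_y hf hl xstar hxstar y' y z
      rw [← hny'y]
      exact this
    have err : l * ‖xstar y z - x‖ ≤ 2*A := by
      have h := fhat_errbound hf hl xstar hxstar y z x
      have h2 := mul_le_mul_of_nonneg_left h h2l
      have h3 : l * (2 / l * ‖gradx f x y + (2*l) • (x - z)‖)
          = 2 * ‖gradx f x y + (2*l) • (x - z)‖ := by field_simp
      rw [h3] at h2
      rw [norm_sub_rev]
      exact h2
    have k4' : l*‖xp - x‖ ≤ 2*l*(ηy*B) + 2*A := by
      have t := mul_le_mul_of_nonneg_left tri h2l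
      have t2 := mul_le_mul_of_nonneg_left lipy h2l
      linarith [t, t2, err]
    have q1 : ‖grady f xp y - gy‖ * B ≤ (2*l*(ηy*B) + 2*A) * B := by
      have h1 := mul_le_mul_of_nonneg_right k4 hB0
      have h2 := mul_le_mul_of_nonneg_right k4' hB0
      linarith [h1, h2]
    have q2 := mul_le_mul_of_nonneg_left q1 hηy0.le
    have q3 := mul_le_mul_of_nonneg_left k3 hηy0.le
    have hdiff : fhat f (2*l) xp y' z - fhat f (2*l) xp y z = f xp y' - f xp y := by
      simp [fhat]
    have habs2 := abs_le.1 hd2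
    linarith [habs2.1, k0, k2, q2, q3, hdiff]
  -- m45 : z-move of Ψ and P
  have m45 : 2*(fhat f (2*l) (xstar y' z') y' z' - fhat f (2*l) (xstar y' z) y' z)
      + 2*(P z - P z') ≥ -(4*l*β*(E*C')) := by
    set xq := xstar y' z' with hxq
    have jzq : ⟪xq - z, z - z'⟫ = -(β * ⟪xq - z, x' - z⟫) := by
      rw [hzz', inner_neg_right, real_inner_smul_right]
    have jzb : ⟪xstarz z - z, z - z'⟫ = -(β * ⟪xstarz z - z, x' - z⟫) := by
      rw [hzz', inner_neg_right, real_inner_smul_right]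
    have j2 : ‖z - z'‖^2 = β^2*C'^2 := by rw [norm_sub_rev, hnz'z]; ring
    have T4 : fhat f (2*l) xq y' z' - fhat f (2*l) (xstar y' z) y' z
        ≥ -(2*l*(β*⟪xq - z, x' - z⟫)) + l*(β^2*C'^2) := by
      have hzs := fhat_zshift (f := f) (l := l) xq z z' y'
      rw [jzq, j2] at hzs
      have k0' : fhat f (2*l) (xstar y' z) y' z ≤ fhat f (2*l) xq y' z := hxstar y' z xq
      linarith [hzs, k0']
    have T5 : P z - P z' ≥ 2*l*(β*⟪xstarz z - z, x' - z⟫) - l*(β^2*C'^2) := by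
      have hPz : P z = Φ (xstarz z) z := hminimax z
      have hPz' : P z' = Φ (xstarz z') z' := hminimax z'
      have hmin : Φ (xstarz z') z' ≤ Φ (xstarz z) z' := hxstarz z' (xstarz z)
      have hshift := phi_shift (f := f) (l := l) Φ hΦ (xstarz z) z z'
      rw [jzb, j2] at hshift
      linarith [hmin, hshift, hPz, hPz']
    have hEC : ⟪xstarz z - z, x' - z⟫ - ⟪xq - z, x' - z⟫ = ⟪xstarz z - xq, x' - z⟫ := by
      rw [← inner_sub_left]
      congr 1
      abel
    have hCS2 : -(E*C') ≤ ⟪xstarz z - xq, x' - z⟫ := by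
      have := (abs_le.1 (abs_real_inner_le_norm (xstarz z - xq) (x' - z))).1
      exact this
    have q := mul_le_mul_of_nonneg_left hCS2 (by positivity : (0:ℝ) ≤ 4*l*β)
    have hEC4 : 4*l*β*(⟪xstarz z - z, x' - z⟫ - ⟪xq - z, x' - z⟫)
        = 4*l*β*⟪xstarz z - xq, x' - z⟫ := by rw [hEC]
    linarith [T4, T5, q, hEC4]
  -- mE and mC
  have mE : E ≤ D + 2*ηy*B + 4*β*C' := by
    have t1 : E ≤ ‖xstarz z - xstar y' z‖ + ‖xstar y' z - xstar y' z'‖ := by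
      have := dist_triangle (xstarz z) (xstar y' z) (xstar y' z')
      simpa [dist_eq_norm] using this
    have t2 : ‖xstarz z - xstar y' z‖ ≤ D + ‖xstar y z - xstar y' z‖ := by
      have := dist_triangle (xstarz z) (xstar y z) (xstar y' z)
      simpa [dist_eq_norm] using this
    have lip1 : ‖xstar y z - xstar y' z‖ ≤ 2 * (ηy*B) := by
      have h := xstar_lip_y hf hl xstar hxstar y y' z
      have hyy : ‖y - y'‖ = ηy*B := by rw [norm_sub_rev, hny'y]
      linarith [h, hyy]
    have lip2 : ‖xstar y' z - xstar y' z'‖ ≤ 4 * (β*C') := by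
      have h := xstar_lip_z hf hl xstar hxstar y' z z'
      have hzn : ‖z - z'‖ = β*C' := by rw [norm_sub_rev, hnz'z]
      linarith [h, hzn]
    linarith [t1, t2, lip1, lip2]
  have mC : C ≤ C' + ηx*A := by
    have := dist_triangle x x' z
    simp only [dist_eq_norm] at this
    rw [norm_sub_rev x x', hnx'x] at this
    linarith [this]
  have main := final_arith l ηx ηy β A B C C' D E
    (fhat f (2*l) x y z - fhat f (2*l) x' y' z)
    (fhat f (2*l) x' y' z - fhat f (2*l) x' y' z')
    (fhat f (2*l) (xstar y' z) y' z - fhat f (2*l) (xstar y z) y z)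
    (2*(fhat f (2*l) (xstar y' z') y' z' - fhat f (2*l) (xstar y' z) y' z) + 2*(P z - P z'))
    hl hηx hε hηy hβ hβ' hA0 hB0 hC0 hC'0 hD0 hE0 mE mC m1 m2 m3 m45
  linarith [main]
end

section
/- Let p = 2l, 0 < η_x ≤ 1/(1000l), η_y = η_x/256, and 0 < β ≤ η_y·l/80000. Given x, z ∈ ℝ^{d1} and y ∈ Y, set x' := x − η_x(∇_x f(x,y) + p(x − z)), y' := P_Y(y + η_y∇_y f(x,y)), z' := z + β(x' − z), and y⁺(z) := P_Y(y + η_y∇_y f(x*(y,z), y)). Then V(x,y,z) − V(x',y',z') ≥ (η_x/64)‖∇_x f̂(x,y,z)‖² + (1/(64η_y))‖y⁺(z) − y‖² + (pβ/16)‖x − z‖² − 48pβ‖x*(z) − x*(y⁺(z),z)‖². -/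
open Set Metric
open scoped RealInnerProductSpace

set_option linter.unusedSectionVars false
set_option linter.unusedVariables false
set_option maxHeartbeats 1000000

section helpers
variable {E : Type*} [NormedAddCommGroup E] [InnerProductSpace ℝ E] [CompleteSpace E]

lemma seg_dist {a b : E} {x : E} (hx : x ∈ segment ℝ a b) : ‖x - a‖ ≤ ‖b - a‖ := by
  obtain ⟨u, v, hu, hv, huv, rfl⟩ := hx
  have : u • a + v • b - a = v • (b - a) := by
    rw [smul_sub]
    rw [show u • a + v • b - a = v • b - (1 - u) • a by module]
    rw [show (1 : ℝ) - u = v by linarith]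
  rw [this, norm_smul]
  simp only [Real.norm_eq_abs, abs_of_nonneg hv]
  nlinarith [norm_nonneg (b - a)]

lemma hasGradientAt_of' {φ : E → ℝ} {L : E →L[ℝ] ℝ} {x g : E}
    (hL : HasFDerivAt φ L x) (hg : ∀ v, L v = ⟪g, v⟫) : HasGradientAt φ g x := by
  have h : L = InnerProductSpace.toDual ℝ E g := by ext v; simp [hg v]
  rw [hasGradientAt_iff_hasFDerivAt]
  exact h ▸ hL

end helpers

-- mvt_inner from before
lemma mvt_inner {E : Type*} [NormedAddCommGroup E] [InnerProductSpace ℝ E] [CompleteSpace E]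
    {φ : E → ℝ} {Gφ : E → E}
    (hφ : ∀ x, HasGradientAt φ (Gφ x) x) (a b c : E) (C : ℝ)
    (hC : ∀ x ∈ segment ℝ a b, ‖Gφ x - c‖ ≤ C) :
    |φ b - φ a - ⟪c, b - a⟫| ≤ C * ‖b - a‖ := by
  set ψ : E → ℝ := fun x => φ x - ⟪c, x⟫ with hψ
  have hder : ∀ x : E, HasFDerivAt ψ (InnerProductSpace.toDual ℝ E (Gφ x) - innerSL ℝ c) x :=
    fun x => ((hφ x).hasFDerivAt).sub ((innerSL ℝ c).hasFDerivAt)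
  have hbound : ∀ x ∈ segment ℝ a b,
      ‖InnerProductSpace.toDual ℝ E (Gφ x) - innerSL ℝ c‖ ≤ C := by
    intro x hx
    have h2 : (InnerProductSpace.toDual ℝ E (Gφ x) - innerSL ℝ c) = innerSL ℝ (Gφ x - c) := by
      ext v; simp [inner_sub_left]
    rw [h2, innerSL_apply_norm]
    exact hC x hx
  have hmv := (convex_segment a b).norm_image_sub_le_of_norm_hasFDerivWithin_le
    (fun x hx => (hder x).hasFDerivWithinAt) hbound (left_mem_segment ℝ a b)
    (right_mem_segment ℝ a b)
  have h3 : ψ b - ψ a = φ b - φ a - ⟪c, b - a⟫ := by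
    simp [hψ, inner_sub_right]; ring
  rw [← h3]
  exact hmv

namespace S14
variable {d1 d2 : ℕ} {l : ℝ}
  {f : EuclideanSpace ℝ (Fin d1) → EuclideanSpace ℝ (Fin d2) → ℝ}

local notation "E1" => EuclideanSpace ℝ (Fin d1)
local notation "E2" => EuclideanSpace ℝ (Fin d2)

lemma hgx (hf : IsLSmooth l f) (x : E1) (y : E2) :
    HasGradientAt (fun x' => f x' y) (gradx f x y) x := by
  have h1 : DifferentiableAt ℝ (fun x' : EuclideanSpace ℝ (Fin d1) => f x' y) x :=
    by have := (hf.1 (x, y)).comp (x := x)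
        ((differentiableAt_id.prodMk (differentiableAt_const y)) :
          DifferentiableAt ℝ (fun x' : EuclideanSpace ℝ (Fin d1) => (x', y)) x)
       exact this
  exact h1.hasGradientAt

lemma hgy (hf : IsLSmooth l f) (x : E1) (y : E2) :
    HasGradientAt (fun y' => f x y') (grady f x y) y := by
  have h1 : DifferentiableAt ℝ (fun y' : EuclideanSpace ℝ (Fin d2) => f x y') y :=
    by have := (hf.1 (x, y)).comp (x := y)
        (((differentiableAt_const x).prodMk differentiableAt_id) :
          DifferentiableAt ℝ (fun y' : EuclideanSpace ℝ (Fin d2) => (x, y')) y)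
       exact this
  exact h1.hasGradientAt

lemma sqrt_le_aux {A L : ℝ} (hA : 0 ≤ A) (hL : 0 ≤ L) (h : A ^ 2 ≤ L ^ 2) : A ≤ L := by
  nlinarith

lemma lipx_x (hf : IsLSmooth l f) (hl : 0 < l) (x₁ x₂ : E1) (y : E2) :
    ‖gradx f x₁ y - gradx f x₂ y‖ ≤ l * ‖x₁ - x₂‖ := by
  have h := hf.2 x₁ x₂ y y
  simp only [sub_self, norm_zero] at h
  apply sqrt_le_aux (norm_nonneg _) (by positivity)
  nlinarith [sq_nonneg ‖grady f x₁ y - grady f x₂ y‖]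

lemma lipx_y (hf : IsLSmooth l f) (hl : 0 < l) (x : E1) (y₁ y₂ : E2) :
    ‖gradx f x y₁ - gradx f x y₂‖ ≤ l * ‖y₁ - y₂‖ := by
  have h := hf.2 x x y₁ y₂
  simp only [sub_self, norm_zero] at h
  apply sqrt_le_aux (norm_nonneg _) (by positivity)
  nlinarith [sq_nonneg ‖grady f x y₁ - grady f x y₂‖]

lemma lipy_x (hf : IsLSmooth l f) (hl : 0 < l) (x₁ x₂ : E1) (y : E2) :
    ‖grady f x₁ y - grady f x₂ y‖ ≤ l * ‖x₁ - x₂‖ := by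
  have h := hf.2 x₁ x₂ y y
  simp only [sub_self, norm_zero] at h
  apply sqrt_le_aux (norm_nonneg _) (by positivity)
  nlinarith [sq_nonneg ‖gradx f x₁ y - gradx f x₂ y‖]

lemma lipy_y (hf : IsLSmooth l f) (hl : 0 < l) (x : E1) (y₁ y₂ : E2) :
    ‖grady f x y₁ - grady f x y₂‖ ≤ l * ‖y₁ - y₂‖ := by
  have h := hf.2 x x y₁ y₂
  simp only [sub_self, norm_zero] at h
  apply sqrt_le_aux (norm_nonneg _) (by positivity)
  nlinarith [sq_nonneg ‖gradx f x y₁ - gradx f x y₂‖]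

/-- quadratic upper/lower bound in `x`. -/
lemma smooth_x (hf : IsLSmooth l f) (hl : 0 < l) (y : E2) (a b : E1) :
    |f b y - f a y - ⟪gradx f a y, b - a⟫| ≤ l * ‖b - a‖ ^ 2 := by
  have h := mvt_inner (φ := fun x => f x y) (Gφ := fun x => gradx f x y)
    (fun x => hgx hf x y) a b (gradx f a y) (l * ‖b - a‖) ?_
  · calc |f b y - f a y - ⟪gradx f a y, b - a⟫| ≤ l * ‖b - a‖ * ‖b - a‖ := h
      _ = l * ‖b - a‖ ^ 2 := by ring
  · intro x hx
    calc ‖gradx f x y - gradx f a y‖ ≤ l * ‖x - a‖ := lipx_x hf hl x a y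
      _ ≤ l * ‖b - a‖ := by
          have := seg_dist hx
          nlinarith

/-- quadratic upper/lower bound in `y`. -/
lemma smooth_y (hf : IsLSmooth l f) (hl : 0 < l) (x : E1) (a b : E2) :
    |f x b - f x a - ⟪grady f x a, b - a⟫| ≤ l * ‖b - a‖ ^ 2 := by
  have h := mvt_inner (φ := fun y => f x y) (Gφ := fun y => grady f x y)
    (fun y => hgy hf x y) a b (grady f x a) (l * ‖b - a‖) ?_
  · calc |f x b - f x a - ⟪grady f x a, b - a⟫| ≤ l * ‖b - a‖ * ‖b - a‖ := h
      _ = l * ‖b - a‖ ^ 2 := by ring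
  · intro yy hy
    calc ‖grady f x yy - grady f x a‖ ≤ l * ‖yy - a‖ := lipy_y hf hl x yy a
      _ ≤ l * ‖b - a‖ := by
          have := seg_dist hy
          nlinarith

/-- cross mean value: `x ↦ f x y₁ - f x y₂` is `l‖y₁ - y₂‖`-Lipschitz. -/
lemma cross_lip (hf : IsLSmooth l f) (hl : 0 < l) (y₁ y₂ : E2) (a b : E1) :
    |(f b y₁ - f b y₂) - (f a y₁ - f a y₂)| ≤ l * ‖y₁ - y₂‖ * ‖b - a‖ := by
  have hG : ∀ x : E1, HasGradientAt (fun x' => f x' y₁ - f x' y₂)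
      (gradx f x y₁ - gradx f x y₂) x := by
    intro x
    have h1 := (hgx hf x y₁).hasFDerivAt.sub (hgx hf x y₂).hasFDerivAt
    apply hasGradientAt_of' h1
    intro v
    simp [inner_sub_left]
  have h := mvt_inner (φ := fun x => f x y₁ - f x y₂)
    (Gφ := fun x => gradx f x y₁ - gradx f x y₂) hG a b 0 (l * ‖y₁ - y₂‖) ?_
  · simpa using h
  · intro x hx
    simpa using lipx_y hf hl x y₁ y₂

/-- gradient of `x ↦ f̂(x, y, z)` with `p = 2l`. -/
lemma hgF (hf : IsLSmooth l f) (hl : 0 < l) (y : E2) (z x : E1) :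
    HasGradientAt (fun x' => fhat f (2 * l) x' y z)
      (gradx f x y + (2 * l) • (x - z)) x := by
  have hid : HasFDerivAt (fun x' : E1 => x' - z) (ContinuousLinearMap.id ℝ E1) x := by
    simpa using (hasFDerivAt_id x).sub_const z
  have hq := hid.inner ℝ hid
  have hsum := (hgx hf x y).hasFDerivAt.add (hq.const_mul (2 * l / 2))
  have hfun : (fun x' : E1 => fhat f (2 * l) x' y z)
      = fun x' => f x' y + 2 * l / 2 * ⟪x' - z, x' - z⟫ := by
    funext x'
    rw [fhat, real_inner_self_eq_norm_sq]
  rw [hfun]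
  apply hasGradientAt_of' hsum
  intro v
  simp only [ContinuousLinearMap.add_apply, ContinuousLinearMap.smul_apply,
    ContinuousLinearMap.comp_apply, ContinuousLinearMap.prod_apply,
    ContinuousLinearMap.coe_smul', Pi.smul_apply, fderivInnerCLM_apply,
    ContinuousLinearMap.id_apply, InnerProductSpace.toDual_apply_apply,
    inner_add_left, real_inner_smul_left, smul_eq_mul]
  rw [real_inner_comm v (x - z)]
  ring

/-- strong monotonicity of the gradient of `f̂(·, y, z)`. -/
lemma smono (hf : IsLSmooth l f) (hl : 0 < l) (y : E2) (z a b : E1) :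
    l * ‖a - b‖ ^ 2 ≤
      ⟪(gradx f a y + (2 * l) • (a - z)) - (gradx f b y + (2 * l) • (b - z)), a - b⟫ := by
  have hcs : |⟪gradx f a y - gradx f b y, a - b⟫| ≤ ‖gradx f a y - gradx f b y‖ * ‖a - b‖ :=
    abs_real_inner_le_norm _ _
  have hlip := lipx_x hf hl a b y
  have hexp : ⟪(gradx f a y + (2 * l) • (a - z)) - (gradx f b y + (2 * l) • (b - z)), a - b⟫
      = ⟪gradx f a y - gradx f b y, a - b⟫ + 2 * l * ‖a - b‖ ^ 2 := by
    have h1 : (gradx f a y + (2 * l) • (a - z)) - (gradx f b y + (2 * l) • (b - z))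
        = (gradx f a y - gradx f b y) + (2 * l) • (a - b) := by module
    rw [h1, inner_add_left, real_inner_smul_left, real_inner_self_eq_norm_sq]
  rw [hexp]
  nlinarith [norm_nonneg (a - b), norm_nonneg (gradx f a y - gradx f b y), abs_le.1 hcs]

/-- gradient vanishes at a global minimizer of `f̂(·, y, z)`. -/
lemma grad_zero (hf : IsLSmooth l f) (hl : 0 < l) (y : E2) (z u : E1)
    (hu : ∀ x, fhat f (2 * l) u y z ≤ fhat f (2 * l) x y z) :
    gradx f u y + (2 * l) • (u - z) = 0 := by
  have hloc : IsLocalMin (fun x' => fhat f (2 * l) x' y z) u :=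
    Filter.Eventually.of_forall hu
  have hfd := (hgF hf hl y z u).hasFDerivAt.fderiv
  have h0 := hloc.fderiv_eq_zero
  rw [h0] at hfd
  have := congrArg (fun L : EuclideanSpace ℝ (Fin d1) →L[ℝ] ℝ =>
    L (gradx f u y + (2 * l) • (u - z))) hfd.symm
  simp only [ContinuousLinearMap.zero_apply, InnerProductSpace.toDual_apply_apply] at this
  exact inner_self_eq_zero.1 this

-- 1D tools
lemma mono1d {φ φ' : ℝ → ℝ} (hd : ∀ t, HasDerivAt φ (φ' t) t)
    (h0 : ∀ t ∈ Ioo (0:ℝ) 1, 0 ≤ φ' t) : φ 0 ≤ φ 1 := by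
  have hmono : MonotoneOn φ (Icc (0:ℝ) 1) := by
    apply monotoneOn_of_deriv_nonneg (convex_Icc 0 1)
    · exact fun t _ => (hd t).continuousAt.continuousWithinAt
    · exact fun t _ => ((hd t).differentiableAt).differentiableWithinAt
    · intro t ht
      rw [interior_Icc] at ht
      rw [(hd t).deriv]
      exact h0 t ht
  exact hmono (by simp) (by simp) zero_le_one

lemma midpoint1d {ψ ψ' : ℝ → ℝ} (hd : ∀ t, HasDerivAt ψ (ψ' t) t)
    (hmono : Monotone ψ') : ψ (1/2) ≤ 1/2 * ψ 0 + 1/2 * ψ 1 := by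
  have hψd : Differentiable ℝ ψ := fun t => (hd t).differentiableAt
  have hderiv : deriv ψ = ψ' := funext fun t => (hd t).deriv
  have hcv : ConvexOn ℝ univ ψ :=
    MonotoneOn.convexOn_of_deriv convex_univ hψd.continuous.continuousOn
      hψd.differentiableOn (by intro a _ b _ hab; rw [hderiv]; exact hmono hab)
  have := hcv.2 (mem_univ (0:ℝ)) (mem_univ (1:ℝ)) (by norm_num : (0:ℝ) ≤ 1/2)
    (by norm_num : (0:ℝ) ≤ 1/2) (by norm_num)
  simpa using this

lemma line_hasDerivAt {E : Type*} [NormedAddCommGroup E] [InnerProductSpace ℝ E]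
    [CompleteSpace E] {φ : E → ℝ} {Gφ : E → E}
    (hφ : ∀ x, HasGradientAt φ (Gφ x) x) (a v : E) (t : ℝ) :
    HasDerivAt (fun s : ℝ => φ (a + s • v)) ⟪Gφ (a + t • v), v⟫ t := by
  have hline : HasDerivAt (fun s : ℝ => a + s • v) v t := by
    simpa using ((hasDerivAt_id t).smul_const v).const_add a
  have := (hφ (a + t • v)).hasFDerivAt.comp_hasDerivAt t hline
  simpa [InnerProductSpace.toDual_apply_apply, Function.comp_def] using this

/-- quadratic growth at a global minimizer of `f̂(·, y, z)`. -/
lemma quadGrowth (hf : IsLSmooth l f) (hl : 0 < l) (y : E2) (z u : E1)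
    (hu : ∀ x, fhat f (2 * l) u y z ≤ fhat f (2 * l) x y z) (x : E1) :
    fhat f (2 * l) u y z + l / 2 * ‖x - u‖ ^ 2 ≤ fhat f (2 * l) x y z := by
  set Δ := x - u with hΔ
  set F : E1 → ℝ := fun x' => fhat f (2 * l) x' y z with hF
  set GF : E1 → E1 := fun x' => gradx f x' y + (2 * l) • (x' - z) with hGF
  have hG : ∀ x', HasGradientAt F (GF x') x' := fun x' => hgF hf hl y z x'
  have hGu : GF u = 0 := grad_zero hf hl y z u hu
  set φ : ℝ → ℝ := fun t => F (u + t • Δ) - l / 2 * t ^ 2 * ‖Δ‖ ^ 2 with hφ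
  have hd : ∀ t : ℝ, HasDerivAt φ (⟪GF (u + t • Δ), Δ⟫ - l * t * ‖Δ‖ ^ 2) t := by
    intro t
    have h1 := line_hasDerivAt hG u Δ t
    have h2 : HasDerivAt (fun s : ℝ => l / 2 * s ^ 2 * ‖Δ‖ ^ 2) (l * t * ‖Δ‖ ^ 2) t := by
      have := ((hasDerivAt_pow 2 t).const_mul (l / 2)).mul_const (‖Δ‖ ^ 2)
      exact this.congr_deriv (by ring)
    exact h1.sub h2
  have hpos : ∀ t ∈ Ioo (0:ℝ) 1, 0 ≤ ⟪GF (u + t • Δ), Δ⟫ - l * t * ‖Δ‖ ^ 2 := by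
    intro t ht
    have hs := smono hf hl y z (u + t • Δ) u
    have he : (u + t • Δ) - u = t • Δ := by abel
    rw [he] at hs
    have hGFsub : (gradx f (u + t • Δ) y + (2 * l) • ((u + t • Δ) - z))
        - (gradx f u y + (2 * l) • (u - z)) = GF (u + t • Δ) := by
      rw [hGF]; simp only []
      rw [show gradx f u y + (2 * l) • (u - z) = (0 : EuclideanSpace ℝ (Fin d1)) from hGu]
      abel
    rw [hGFsub] at hs
    rw [real_inner_smul_right, norm_smul] at hs
    simp only [Real.norm_eq_abs, abs_of_pos ht.1] at hs
    have ht0 := ht.1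
    nlinarith [hs]
  have h01 := mono1d hd hpos
  have h0 : φ 0 = F u := by simp [hφ]
  have h1 : φ 1 = F x - l / 2 * ‖Δ‖ ^ 2 := by
    simp [hφ, hΔ]
  rw [h0, h1] at h01
  linarith

/-- midpoint strong convexity of `f̂(·, y, z)`. -/
lemma midSC (hf : IsLSmooth l f) (hl : 0 < l) (y : E2) (z a b : E1) :
    fhat f (2 * l) (a + (1/2 : ℝ) • (b - a)) y z
      ≤ 1/2 * fhat f (2 * l) a y z + 1/2 * fhat f (2 * l) b y z - l / 8 * ‖b - a‖ ^ 2 := by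
  set d := b - a with hdd
  set F : E1 → ℝ := fun x' => fhat f (2 * l) x' y z with hF
  set GF : E1 → E1 := fun x' => gradx f x' y + (2 * l) • (x' - z) with hGF
  have hG : ∀ x', HasGradientAt F (GF x') x' := fun x' => hgF hf hl y z x'
  set ψ : ℝ → ℝ := fun t => F (a + t • d) - l / 2 * t ^ 2 * ‖d‖ ^ 2 with hψ
  set ψ' : ℝ → ℝ := fun t => ⟪GF (a + t • d), d⟫ - l * t * ‖d‖ ^ 2 with hψ'
  have hd : ∀ t : ℝ, HasDerivAt ψ (ψ' t) t := by
    intro t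
    have h1 := line_hasDerivAt hG a d t
    have h2 : HasDerivAt (fun s : ℝ => l / 2 * s ^ 2 * ‖d‖ ^ 2) (l * t * ‖d‖ ^ 2) t := by
      have := ((hasDerivAt_pow 2 t).const_mul (l / 2)).mul_const (‖d‖ ^ 2)
      exact this.congr_deriv (by ring)
    exact h1.sub h2
  have hmono : Monotone ψ' := by
    intro s t hst
    rcases eq_or_lt_of_le hst with rfl | hlt
    · exact le_rfl
    · have hs := smono hf hl y z (a + t • d) (a + s • d)
      have he : (a + t • d) - (a + s • d) = (t - s) • d := by
        rw [sub_smul]; abel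
      rw [he] at hs
      have hGFsub : (gradx f (a + t • d) y + (2 * l) • ((a + t • d) - z))
          - (gradx f (a + s • d) y + (2 * l) • ((a + s • d) - z))
          = GF (a + t • d) - GF (a + s • d) := by rw [hGF]
      rw [hGFsub, real_inner_smul_right, norm_smul] at hs
      simp only [Real.norm_eq_abs, abs_of_pos (by linarith : (0:ℝ) < t - s)] at hs
      rw [inner_sub_left] at hs
      have hts : (0:ℝ) < t - s := by linarith
      simp only [hψ']
      nlinarith [hs]
  have := midpoint1d hd hmono
  have h0 : ψ 0 = F a := by simp [hψ]
  have h1 : ψ 1 = F b - l / 2 * ‖d‖ ^ 2 := by simp [hψ, hdd]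
  have hhalf : ψ (1/2) = F (a + (1/2 : ℝ) • d) - l / 8 * ‖d‖ ^ 2 := by
    simp only [hψ]
    ring_nf
  rw [h0, h1, hhalf] at this
  have hgoal : F (a + (1/2 : ℝ) • d) ≤ 1/2 * F a + 1/2 * F b - l / 8 * ‖d‖ ^ 2 := by
    linarith
  exact hgoal

/-- distance to minimizer bounded by gradient norm. -/
lemma dist_to_min (hf : IsLSmooth l f) (hl : 0 < l) (y : E2) (z u : E1)
    (hu : ∀ x, fhat f (2 * l) u y z ≤ fhat f (2 * l) x y z) (x : E1) :
    l * ‖x - u‖ ≤ ‖gradx f x y + (2 * l) • (x - z)‖ := by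
  have hs := smono hf hl y z x u
  have hGu : gradx f u y + (2 * l) • (u - z) = 0 := grad_zero hf hl y z u hu
  rw [hGu, sub_zero] at hs
  have hcs : ⟪gradx f x y + (2 * l) • (x - z), x - u⟫
      ≤ ‖gradx f x y + (2 * l) • (x - z)‖ * ‖x - u‖ := real_inner_le_norm _ _
  rcases eq_or_lt_of_le (norm_nonneg (x - u)) with h0 | h0
  · rw [← h0, mul_zero]; positivity
  · nlinarith

/-- Lipschitz dependence of the minimizer on `y`. -/
lemma xstar_lip_y (hf : IsLSmooth l f) (hl : 0 < l) (z : E1) (y₁ y₂ : E2) (u₁ u₂ : E1)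
    (h₁ : ∀ x, fhat f (2 * l) u₁ y₁ z ≤ fhat f (2 * l) x y₁ z)
    (h₂ : ∀ x, fhat f (2 * l) u₂ y₂ z ≤ fhat f (2 * l) x y₂ z) :
    ‖u₁ - u₂‖ ≤ ‖y₁ - y₂‖ := by
  have q₁ := quadGrowth hf hl y₁ z u₁ h₁ u₂
  have q₂ := quadGrowth hf hl y₂ z u₂ h₂ u₁
  have hc := cross_lip hf hl y₁ y₂ u₁ u₂
  have hfh : ∀ x : E1, fhat f (2 * l) x y₁ z - fhat f (2 * l) x y₂ z = f x y₁ - f x y₂ := by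
    intro x; rw [fhat, fhat]; ring
  have hn : ‖u₁ - u₂‖ = ‖u₂ - u₁‖ := norm_sub_rev _ _
  rw [hn] at q₂
  have key : l * ‖u₂ - u₁‖ ^ 2 ≤ (f u₂ y₁ - f u₂ y₂) - (f u₁ y₁ - f u₁ y₂) := by
    have e1 := hfh u₁
    have e2 := hfh u₂
    linarith
  have habs := (abs_le.1 hc).2
  rcases eq_or_lt_of_le (norm_nonneg (u₂ - u₁)) with h0 | h0
  · rw [norm_sub_rev, ← h0]; exact norm_nonneg _
  · rw [norm_sub_rev u₁ u₂]
    nlinarith [mul_pos hl h0]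

/-- Lipschitz dependence of the minimizer on `z`. -/
lemma xstar_lip_z (hf : IsLSmooth l f) (hl : 0 < l) (y : E2) (z₁ z₂ : E1) (u₁ u₂ : E1)
    (h₁ : ∀ x, fhat f (2 * l) u₁ y z₁ ≤ fhat f (2 * l) x y z₁)
    (h₂ : ∀ x, fhat f (2 * l) u₂ y z₂ ≤ fhat f (2 * l) x y z₂) :
    ‖u₁ - u₂‖ ≤ 2 * ‖z₁ - z₂‖ := by
  have q₁ := quadGrowth hf hl y z₁ u₁ h₁ u₂
  have q₂ := quadGrowth hf hl y z₂ u₂ h₂ u₁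
  have hexp : ∀ x : E1, fhat f (2 * l) x y z₁ - fhat f (2 * l) x y z₂
      = l * (2 * ⟪x, z₂ - z₁⟫ + ‖z₁‖ ^ 2 - ‖z₂‖ ^ 2) := by
    intro x
    rw [fhat, fhat]
    rw [← real_inner_self_eq_norm_sq, ← real_inner_self_eq_norm_sq,
      ← real_inner_self_eq_norm_sq, ← real_inner_self_eq_norm_sq]
    simp only [inner_sub_left, inner_sub_right]
    rw [real_inner_comm x z₁, real_inner_comm x z₂]
    ring
  have hn : ‖u₁ - u₂‖ = ‖u₂ - u₁‖ := norm_sub_rev _ _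
  rw [hn] at q₂
  have key0 : l * ‖u₂ - u₁‖ ^ 2 ≤ (fhat f (2 * l) u₂ y z₁ - fhat f (2 * l) u₂ y z₂)
      - (fhat f (2 * l) u₁ y z₁ - fhat f (2 * l) u₁ y z₂) := by linarith
  have key : l * ‖u₂ - u₁‖ ^ 2 ≤ 2 * l * ⟪u₂ - u₁, z₂ - z₁⟫ := by
    have e1 := hexp u₁
    have e2 := hexp u₂
    have hi : ⟪u₂ - u₁, z₂ - z₁⟫ = ⟪u₂, z₂ - z₁⟫ - ⟪u₁, z₂ - z₁⟫ := inner_sub_left _ _ _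
    have erhs : (fhat f (2 * l) u₂ y z₁ - fhat f (2 * l) u₂ y z₂)
        - (fhat f (2 * l) u₁ y z₁ - fhat f (2 * l) u₁ y z₂)
        = 2 * l * ⟪u₂ - u₁, z₂ - z₁⟫ := by rw [e1, e2, hi]; ring
    linarith
  have hcs : ⟪u₂ - u₁, z₂ - z₁⟫ ≤ ‖u₂ - u₁‖ * ‖z₂ - z₁‖ := real_inner_le_norm _ _
  rcases eq_or_lt_of_le (norm_nonneg (u₂ - u₁)) with h0 | h0
  · rw [norm_sub_rev, ← h0]; positivity
  · rw [norm_sub_rev u₁ u₂, show ‖z₁ - z₂‖ = ‖z₂ - z₁‖ from norm_sub_rev _ _]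
    nlinarith [mul_pos hl h0, mul_le_mul_of_nonneg_left hcs (by positivity : (0:ℝ) ≤ 2 * l)]

end S14

namespace S14
variable {d1 d2 : ℕ} {l : ℝ}
  {f : EuclideanSpace ℝ (Fin d1) → EuclideanSpace ℝ (Fin d2) → ℝ}

local notation "E1" => EuclideanSpace ℝ (Fin d1)
local notation "E2" => EuclideanSpace ℝ (Fin d2)

/-- quadratic growth for `Φ` at its minimizer. -/
lemma Phi_growth (hf : IsLSmooth l f) (hl : 0 < l) (Y : Set E2)
    (Φ : E1 → E1 → ℝ)
    (hΦ : ∀ x z, IsGreatest ((fun y => fhat f (2 * l) x y z) '' Y) (Φ x z))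
    (xstarz : E1 → E1) (hxstarz : ∀ z x, Φ (xstarz z) z ≤ Φ x z) (z x : E1) :
    Φ (xstarz z) z + l / 4 * ‖x - xstarz z‖ ^ 2 ≤ Φ x z := by
  set u := xstarz z with hu
  set m := u + (1/2 : ℝ) • (x - u) with hm
  obtain ⟨ym, hymY, hym⟩ := (hΦ m z).1
  have hub1 : fhat f (2 * l) u ym z ≤ Φ u z := (hΦ u z).2 ⟨ym, hymY, rfl⟩
  have hub2 : fhat f (2 * l) x ym z ≤ Φ x z := (hΦ x z).2 ⟨ym, hymY, rfl⟩
  have hmid := midSC hf hl ym z u x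
  have hlow : Φ u z ≤ Φ m z := hxstarz z m
  rw [← hym] at hlow
  linarith

/-- `Φ(x, z₁) - l‖x - z₁‖² = Φ(x, z₂) - l‖x - z₂‖²`. -/
lemma Phi_shift (hf : IsLSmooth l f) (hl : 0 < l) (Y : Set E2)
    (Φ : E1 → E1 → ℝ)
    (hΦ : ∀ x z, IsGreatest ((fun y => fhat f (2 * l) x y z) '' Y) (Φ x z))
    (x z₁ z₂ : E1) :
    Φ x z₁ - l * ‖x - z₁‖ ^ 2 = Φ x z₂ - l * ‖x - z₂‖ ^ 2 := by
  have key : ∀ w₁ w₂ : E1, Φ x w₁ - l * ‖x - w₁‖ ^ 2 ≤ Φ x w₂ - l * ‖x - w₂‖ ^ 2 := by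
    intro w₁ w₂
    obtain ⟨y₁, hy₁Y, hy₁⟩ := (hΦ x w₁).1
    have hub : fhat f (2 * l) x y₁ w₂ ≤ Φ x w₂ := (hΦ x w₂).2 ⟨y₁, hy₁Y, rfl⟩
    rw [← hy₁]
    simp only [fhat] at hub ⊢
    linarith
  exact le_antisymm (key z₁ z₂) (key z₂ z₁)

/-- Lipschitz dependence of `x*(z)` on `z`. -/
lemma xstarz_lip (hf : IsLSmooth l f) (hl : 0 < l) (Y : Set E2)
    (Φ : E1 → E1 → ℝ)
    (hΦ : ∀ x z, IsGreatest ((fun y => fhat f (2 * l) x y z) '' Y) (Φ x z))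
    (xstarz : E1 → E1) (hxstarz : ∀ z x, Φ (xstarz z) z ≤ Φ x z) (z₁ z₂ : E1) :
    ‖xstarz z₁ - xstarz z₂‖ ≤ 4 * ‖z₁ - z₂‖ := by
  set u₁ := xstarz z₁
  set u₂ := xstarz z₂
  have q₁ := Phi_growth hf hl Y Φ hΦ xstarz hxstarz z₁ u₂
  have q₂ := Phi_growth hf hl Y Φ hΦ xstarz hxstarz z₂ u₁
  have hn : ‖u₁ - u₂‖ = ‖u₂ - u₁‖ := norm_sub_rev _ _
  rw [hn] at q₂
  have s1 := Phi_shift hf hl Y Φ hΦ u₁ z₁ z₂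
  have s2 := Phi_shift hf hl Y Φ hΦ u₂ z₁ z₂
  have key0 : l / 2 * ‖u₂ - u₁‖ ^ 2
      ≤ (l * ‖u₂ - z₁‖ ^ 2 - l * ‖u₂ - z₂‖ ^ 2) - (l * ‖u₁ - z₁‖ ^ 2 - l * ‖u₁ - z₂‖ ^ 2) := by
    linarith
  have hexp : (l * ‖u₂ - z₁‖ ^ 2 - l * ‖u₂ - z₂‖ ^ 2) - (l * ‖u₁ - z₁‖ ^ 2 - l * ‖u₁ - z₂‖ ^ 2)
      = 2 * l * ⟪u₂ - u₁, z₂ - z₁⟫ := by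
    rw [← real_inner_self_eq_norm_sq, ← real_inner_self_eq_norm_sq,
      ← real_inner_self_eq_norm_sq, ← real_inner_self_eq_norm_sq]
    simp only [inner_sub_left, inner_sub_right]
    rw [real_inner_comm u₁ z₁, real_inner_comm u₁ z₂, real_inner_comm u₂ z₁,
      real_inner_comm u₂ z₂]
    ring
  rw [hexp] at key0
  have hcs : ⟪u₂ - u₁, z₂ - z₁⟫ ≤ ‖u₂ - u₁‖ * ‖z₂ - z₁‖ := real_inner_le_norm _ _
  rcases eq_or_lt_of_le (norm_nonneg (u₂ - u₁)) with h0 | h0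
  · rw [norm_sub_rev, ← h0]; positivity
  · rw [norm_sub_rev u₁ u₂, show ‖z₁ - z₂‖ = ‖z₂ - z₁‖ from norm_sub_rev _ _]
    nlinarith [mul_pos hl h0, mul_le_mul_of_nonneg_left hcs (by positivity : (0:ℝ) ≤ 2 * l)]

end S14

section proj
variable {E : Type*} [NormedAddCommGroup E] [InnerProductSpace ℝ E]

lemma proj_VI {Y : Set E} (hYconv : Convex ℝ Y)
    (projY : E → E) (hmem : ∀ v, projY v ∈ Y)
    (hproj : ∀ v, ∀ w ∈ Y, ‖v - projY v‖ ≤ ‖v - w‖) (v : E) :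
    ∀ w ∈ Y, ⟪v - projY v, w - projY v⟫ ≤ 0 := by
  haveI : Nonempty Y := ⟨⟨projY v, hmem v⟩⟩
  have h1 : ‖v - projY v‖ = ⨅ w : Y, ‖v - w‖ := by
    apply le_antisymm
    · exact le_ciInf fun w => hproj v w w.2
    · have hbd : BddBelow (Set.range fun w : Y => ‖v - (w : E)‖) :=
        ⟨0, by rintro a ⟨w, rfl⟩; exact norm_nonneg _⟩
      exact ciInf_le hbd ⟨projY v, hmem v⟩
  exact (norm_eq_iInf_iff_real_inner_le_zero hYconv (hmem v)).1 h1

lemma proj_nonexp {Y : Set E} (projY : E → E)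
    (hVI : ∀ v, ∀ w ∈ Y, ⟪v - projY v, w - projY v⟫ ≤ 0)
    (hmem : ∀ v, projY v ∈ Y) (v1 v2 : E) :
    ‖projY v1 - projY v2‖ ≤ ‖v1 - v2‖ := by
  set p1 := projY v1; set p2 := projY v2
  have h1 := hVI v1 p2 (hmem v2)
  have h2 := hVI v2 p1 (hmem v1)
  have key : ‖p1 - p2‖ ^ 2 ≤ ⟪v1 - v2, p1 - p2⟫ := by
    have e1 : ⟪v1 - p1, p2 - p1⟫ + ⟪v2 - p2, p1 - p2⟫
        = -⟪v1 - v2, p1 - p2⟫ + ‖p1 - p2‖ ^ 2 := by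
      simp only [inner_sub_left, inner_sub_right, ← real_inner_self_eq_norm_sq]
      simp only [real_inner_comm p2 p1, real_inner_comm p2 v1, real_inner_comm p1 v2,
        real_inner_comm p2 v2, real_inner_comm p1 v1, real_inner_comm v2 v1]
      ring
    have h3 := add_nonpos h1 h2
    rw [e1] at h3
    linarith
  have hcs : ⟪v1 - v2, p1 - p2⟫ ≤ ‖v1 - v2‖ * ‖p1 - p2‖ := real_inner_le_norm _ _
  nlinarith [norm_nonneg (p1 - p2), norm_nonneg (v1 - v2)]

/-- the projected ascent step inequality: `⟪d, q - y⟫ ≥ ‖q - y‖²/s` in product form. -/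
lemma proj_step {Y : Set E} (projY : E → E)
    (hVI : ∀ v, ∀ w ∈ Y, ⟪v - projY v, w - projY v⟫ ≤ 0)
    {y : E} (hy : y ∈ Y) (d : E) :
    ‖projY (y + d) - y‖ ^ 2 ≤ ⟪d, projY (y + d) - y⟫ := by
  have h := hVI (y + d) y hy
  set q := projY (y + d)
  have e1 : ⟪y + d - q, y - q⟫ = -⟪d, q - y⟫ + ‖q - y‖ ^ 2 := by
    rw [show y + d - q = d - (q - y) by abel, show y - q = -(q - y) by abel]
    rw [inner_neg_right, inner_sub_left, real_inner_self_eq_norm_sq]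
    ring
  rw [e1] at h
  linarith

end proj


-- standalone scalar lemmas (small context for linarith)
lemma S2aux (l ηx ηy c a b G : ℝ) (hηx : 0 < ηx) (hηy : ηy = ηx / 256)
    (hlηx : l * ηx ≤ 1 / 1000)
    (hc' : a ^ 2 ≤ ηx / 256 * c)
    (hla : l * ηx * a ^ 2 ≤ 1 / 1000 * a ^ 2)
    (hb2' : b ^ 2 ≤ 2 * a ^ 2 + 2 * (ηx / 256) ^ 2 * G ^ 2) :
    c - 5 * l * a ^ 2 - 3 * G * a ≥ 1 / (64 * ηy) * b ^ 2 - ηx / 4 * G ^ 2 := by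
  have hsq : (0:ℝ) ≤ (a - ηx / 160 * G) ^ 2 := sq_nonneg _
  have hq1 : (0:ℝ) ≤ ηx ^ 2 * G ^ 2 := by positivity
  have hq2 : (0:ℝ) ≤ a ^ 2 := sq_nonneg a
  have S2m : ηx / 256 * c - 5 * l * (ηx / 256) * a ^ 2 - 3 * (ηx / 256) * G * a
      + ηx / 256 * (ηx / 4) * G ^ 2 - 1 / 64 * b ^ 2 ≥ 0 := by
    linarith [hc', hla, hb2', hsq, hq1, hq2]
  have h4 : 4 * b ^ 2 / ηx ≤ c - 5 * l * a ^ 2 - 3 * G * a + ηx / 4 * G ^ 2 := by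
    rw [div_le_iff₀ hηx]
    linarith [S2m]
  have h5 : 1 / (64 * ηy) * b ^ 2 = 4 * b ^ 2 / ηx := by
    rw [hηy]; field_simp; ring
  linarith [h4, h5.le, h5.ge]

lemma S3aux (l ηx ηy β G W X Eb : ℝ) (hl : 0 < l) (hηx : 0 < ηx) (hβ : 0 < β)
    (hηy : ηy = ηx / 256) (hβ1 : β ≤ 1 / 1000000)
    (hlηx : l * ηx ≤ 1 / 1000) (hlηy : l * ηy ≤ 1 / 256000)
    (hG0 : 0 ≤ G) (hW0 : 0 ≤ W) (hE0 : 0 ≤ Eb)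
    (hX2 : X ^ 2 ≤ 2 * W ^ 2 + 2 * ηx ^ 2 * G ^ 2) :
    l * (2 * β - β ^ 2) * W ^ 2 - 4 * l * β * ((8 * β * W + Eb + ηy * G) * W)
      ≥ 2 * l * β / 16 * X ^ 2 - 96 * l * β * Eb ^ 2 - ηx / 16 * G ^ 2 := by
  have hηy0 : 0 < ηy := by rw [hηy]; positivity
  have hlβW : (0:ℝ) ≤ l * β * W ^ 2 := by positivity
  have t1 : (0:ℝ) ≤ l * β * (48 * Eb - W) ^ 2 :=
    mul_nonneg (mul_nonneg hl.le hβ.le) (sq_nonneg _)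
  have t2 : (0:ℝ) ≤ l * β * (W - 4 * ηy * G) ^ 2 :=
    mul_nonneg (mul_nonneg hl.le hβ.le) (sq_nonneg _)
  have t3 : l * β * X ^ 2 ≤ l * β * (2 * W ^ 2 + 2 * ηx ^ 2 * G ^ 2) :=
    mul_le_mul_of_nonneg_left hX2 (by positivity)
  have t4 : β * (l * β * W ^ 2) ≤ 1 / 1000000 * (l * β * W ^ 2) :=
    mul_le_mul_of_nonneg_right hβ1 hlβW
  have t5 : l * ηy * (β * ηy * G ^ 2) ≤ 1 / 256000 * (β * ηy * G ^ 2) :=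
    mul_le_mul_of_nonneg_right hlηy (by positivity)
  have t5b : β * (ηy * G ^ 2) ≤ 1 / 1000000 * (ηy * G ^ 2) :=
    mul_le_mul_of_nonneg_right hβ1 (by positivity)
  have heq : ηy * G ^ 2 = ηx / 256 * G ^ 2 := by rw [hηy]
  have t6 : l * ηx * (β * ηx * G ^ 2) ≤ 1 / 1000 * (β * ηx * G ^ 2) :=
    mul_le_mul_of_nonneg_right hlηx (by positivity)
  have t7 : β * (ηx * G ^ 2) ≤ 1 / 1000000 * (ηx * G ^ 2) :=
    mul_le_mul_of_nonneg_right hβ1 (by positivity)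
  have hηxG : (0:ℝ) ≤ ηx * G ^ 2 := by positivity
  linarith [t1, t2, t3, t4, t5, t5b, t6, t7, heq.le, heq.ge, hηxG, hlβW]

/-- potential decrease, constrained case: with `p = 2l`,
`0 < η_x ≤ 1/(1000l)`, `η_y = η_x/256`, `0 < β ≤ η_y l/80000`, one projected step of
Smoothed-GDA decreases the potential `V = f̂ − 2Ψ + 2P` by at least
`(η_x/64)‖∇_x f̂(x,y,z)‖² + (1/(64η_y))‖y⁺(z) − y‖² + (pβ/16)‖x−z‖²
  − 48pβ‖x*(z) − x*(y⁺(z),z)‖²`, where `y⁺(z) = P_Y(y + η_y ∇_y f(x*(y,z), y))`. -/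
theorem statement14 {d1 d2 : ℕ} (l ηx ηy β : ℝ) (hl : 0 < l)
    (hηx : 0 < ηx) (hηx' : ηx ≤ 1 / (1000 * l)) (hηy : ηy = ηx / 256)
    (hβ : 0 < β) (hβ' : β ≤ ηy * l / 80000)
    (f : EuclideanSpace ℝ (Fin d1) → EuclideanSpace ℝ (Fin d2) → ℝ)
    (hf : IsLSmooth l f)
    -- `Y` nonempty convex compact; `projY` the nearest-point projection onto `Y`
    (Y : Set (EuclideanSpace ℝ (Fin d2))) (hYne : Y.Nonempty) (hYconv : Convex ℝ Y)
    (hYcomp : IsCompact Y)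
    (projY : EuclideanSpace ℝ (Fin d2) → EuclideanSpace ℝ (Fin d2))
    (hprojY_mem : ∀ v, projY v ∈ Y)
    (hprojY : ∀ v, ∀ w ∈ Y, ‖v - projY v‖ ≤ ‖v - w‖)
    -- `x*(y, z)`: minimizer of `x ↦ f̂(x, y, z)` with `p = 2l`; `Ψ(y,z) = f̂(x*(y,z),y,z)`
    (xstar : EuclideanSpace ℝ (Fin d2) → EuclideanSpace ℝ (Fin d1) → EuclideanSpace ℝ (Fin d1))
    (hxstar : ∀ y z x, fhat f (2 * l) (xstar y z) y z ≤ fhat f (2 * l) x y z)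
    -- `Φ(x,z) = max_{y∈Y} f̂(x,y,z)` (attained), with minimizer `x*(z)` in `x`
    (Φ : EuclideanSpace ℝ (Fin d1) → EuclideanSpace ℝ (Fin d1) → ℝ)
    (hΦ : ∀ x z, IsGreatest ((fun y => fhat f (2 * l) x y z) '' Y) (Φ x z))
    (xstarz : EuclideanSpace ℝ (Fin d1) → EuclideanSpace ℝ (Fin d1))
    (hxstarz : ∀ z x, Φ (xstarz z) z ≤ Φ x z)
    -- minimax regularity: `P(z) = sup_{y∈Y} Ψ(y,z)` attained at `ŷ*(z) ∈ Y`,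
    -- `P(z) = min_x Φ(x,z)` and `x*(ŷ*(z),z) = x*(z)`
    (P : EuclideanSpace ℝ (Fin d1) → ℝ)
    (yhat : EuclideanSpace ℝ (Fin d1) → EuclideanSpace ℝ (Fin d2))
    (hyhatY : ∀ z, yhat z ∈ Y)
    (hPub : ∀ z, ∀ y ∈ Y, fhat f (2 * l) (xstar y z) y z ≤ P z)
    (hyhat : ∀ z, fhat f (2 * l) (xstar (yhat z) z) (yhat z) z = P z)
    (hminimax : ∀ z, P z = Φ (xstarz z) z)
    (hxyhat : ∀ z, xstar (yhat z) z = xstarz z)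
    -- one step of Smoothed-GDA
    (x z : EuclideanSpace ℝ (Fin d1)) (y : EuclideanSpace ℝ (Fin d2)) (hy : y ∈ Y)
    (x' z' : EuclideanSpace ℝ (Fin d1)) (y' : EuclideanSpace ℝ (Fin d2))
    (hx' : x' = x - ηx • (gradx f x y + (2 * l) • (x - z)))
    (hy' : y' = projY (y + ηy • grady f x y))
    (hz' : z' = z + β • (x' - z)) :
    (fhat f (2 * l) x y z - 2 * fhat f (2 * l) (xstar y z) y z + 2 * P z)
        - (fhat f (2 * l) x' y' z' - 2 * fhat f (2 * l) (xstar y' z') y' z' + 2 * P z')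
      ≥ ηx / 64 * ‖gradx f x y + (2 * l) • (x - z)‖ ^ 2
        + 1 / (64 * ηy) * ‖projY (y + ηy • grady f (xstar y z) y) - y‖ ^ 2
        + (2 * l) * β / 16 * ‖x - z‖ ^ 2
        - 48 * (2 * l) * β
            * ‖xstarz z - xstar (projY (y + ηy • grady f (xstar y z) y)) z‖ ^ 2 := by
  
  classical
  -- basic parameter facts
  have hηy0 : 0 < ηy := by rw [hηy]; positivity
  have hlηx : l * ηx ≤ 1 / 1000 := by
    rw [le_div_iff₀ (by positivity : (0:ℝ) < 1000 * l)] at hηx'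
    nlinarith
  have hlηy : l * ηy ≤ 1 / 256000 := by
    rw [hηy]; nlinarith
  have hβ1 : β ≤ 1 / 1000000 := by
    have : ηy * l / 80000 ≤ 1 / 256000 / 80000 := by
      have : ηy * l ≤ 1 / 256000 := by linarith [hlηy, mul_comm l ηy]
      linarith
    calc β ≤ ηy * l / 80000 := hβ'
      _ ≤ 1 / 256000 / 80000 := this
      _ ≤ 1 / 1000000 := by norm_num
  -- notation
  set g : EuclideanSpace ℝ (Fin d1) := gradx f x y + (2 * l) • (x - z) with hg
  set G : ℝ := ‖g‖ with hG
  set u : EuclideanSpace ℝ (Fin d1) := xstar y z with hu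
  set yp : EuclideanSpace ℝ (Fin d2) := projY (y + ηy • grady f u y) with hyp
  set a : ℝ := ‖y' - y‖ with ha
  set b : ℝ := ‖yp - y‖ with hb
  set w : EuclideanSpace ℝ (Fin d1) := x' - z with hw
  set W : ℝ := ‖w‖ with hWdef
  set X : ℝ := ‖x - z‖ with hX
  set Eb : ℝ := ‖xstarz z - xstar yp z‖ with hEb
  set xt : EuclideanSpace ℝ (Fin d1) := xstar y' z with hxt
  set q : EuclideanSpace ℝ (Fin d1) := xstar y' z' with hq
  set rr : EuclideanSpace ℝ (Fin d1) := xstar (yhat z') z with hrr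
  have hG0 : 0 ≤ G := norm_nonneg _
  have ha0 : 0 ≤ a := norm_nonneg _
  have hb0 : 0 ≤ b := norm_nonneg _
  have hW0 : 0 ≤ W := norm_nonneg _
  have hX0 : 0 ≤ X := norm_nonneg _
  have hE0 : 0 ≤ Eb := norm_nonneg _
  have hVI := proj_VI hYconv projY hprojY_mem hprojY
  -- F1 : primal descent
  have hxx' : x' - x = -(ηx • g) := by rw [hx']; abel
  have hnxx' : ‖x' - x‖ = ηx * G := by
    rw [hxx', norm_neg, norm_smul, Real.norm_eq_abs, abs_of_pos hηx, hG]
  have hgg : ⟪gradx f x y, g⟫ = G ^ 2 - 2 * l * ⟪x - z, g⟫ := by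
    have h1 : G ^ 2 = ⟪g, g⟫ := (real_inner_self_eq_norm_sq g).symm
    rw [h1, hg]
    rw [inner_add_left, real_inner_smul_left]
    ring
  have hinner1 : ⟪gradx f x y, x' - x⟫
      = -(ηx * (G ^ 2 - 2 * l * ⟪x - z, g⟫)) := by
    rw [hxx', inner_neg_right, real_inner_smul_right, hgg]
  have hsx := S14.smooth_x hf hl y x x'
  have key1 : f x y - f x' y
      ≥ ηx * G ^ 2 - 2 * ηx * l * ⟪x - z, g⟫ - l * ηx ^ 2 * G ^ 2 := by
    have h1 := (abs_le.1 hsx).2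
    rw [hinner1, hnxx'] at h1
    nlinarith [h1]
  have hquad : ‖x' - z‖ ^ 2 = ‖x - z‖ ^ 2 - 2 * ηx * ⟪x - z, g⟫ + ηx ^ 2 * G ^ 2 := by
    have hxz : x' - z = (x - z) - ηx • g := by rw [hx']; abel
    rw [hxz, norm_sub_sq_real, real_inner_smul_right, norm_smul, Real.norm_eq_abs,
      abs_of_pos hηx, mul_pow, hG]
    ring
  have key2 : l * (‖x - z‖ ^ 2 - ‖x' - z‖ ^ 2)
      = 2 * l * ηx * ⟪x - z, g⟫ - l * ηx ^ 2 * G ^ 2 := by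
    rw [hquad]; ring
  have F1 : fhat f (2 * l) x y z - fhat f (2 * l) x' y z
      ≥ ηx * G ^ 2 - 2 * l * ηx ^ 2 * G ^ 2 := by
    have e : fhat f (2 * l) x y z - fhat f (2 * l) x' y z
        = (f x y - f x' y) + l * (‖x - z‖ ^ 2 - ‖x' - z‖ ^ 2) := by
      simp only [fhat]; ring
    rw [e, key2]
    linarith [key1]
  -- distance from x to the minimizer u
  have hGub : l * ‖x - u‖ ≤ G := by
    have h1 := S14.dist_to_min hf hl y z u (hxstar y z) x
    rw [← hg, ← hG] at h1
    exact h1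
  -- yp is close to y'
  have hypy' : ‖yp - y'‖ ≤ ηy * G := by
    have hne := proj_nonexp projY hVI hprojY_mem (y + ηy • grady f u y) (y + ηy • grady f x y)
    have harg : (y + ηy • grady f u y) - (y + ηy • grady f x y)
        = ηy • (grady f u y - grady f x y) := by rw [smul_sub]; abel
    rw [harg, norm_smul, Real.norm_eq_abs, abs_of_pos hηy0] at hne
    have hlip := S14.lipy_x hf hl u x y
    have hnrev : ‖u - x‖ = ‖x - u‖ := norm_sub_rev _ _
    rw [hyp, hy']
    calc ‖projY (y + ηy • grady f u y) - projY (y + ηy • grady f x y)‖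
        ≤ ηy * ‖grady f u y - grady f x y‖ := hne
      _ ≤ ηy * G := by nlinarith [hlip, hGub, norm_nonneg (grady f u y - grady f x y)]
  have hbb : b ≤ a + ηy * G := by
    have htri : ‖yp - y‖ ≤ ‖yp - y'‖ + ‖y' - y‖ := by
      have h1 := norm_add_le (yp - y') (y' - y)
      rw [sub_add_sub_cancel] at h1
      exact h1
    rw [hb, ha]
    calc ‖yp - y‖ ≤ ‖yp - y'‖ + ‖y' - y‖ := htri
      _ ≤ ηy * G + ‖y' - y‖ := by linarith [hypy']
      _ = ‖y' - y‖ + ηy * G := by ring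
  -- projected ascent step inequality
  set c : ℝ := ⟪grady f x y, y' - y⟫ with hcdef
  have hc : a ^ 2 ≤ ηy * c := by
    have h1 := proj_step projY hVI hy (ηy • grady f x y)
    rw [← hy'] at h1
    rw [real_inner_smul_left] at h1
    rw [ha, hcdef]
    exact h1
  -- T bound
  have hT : f x' y - f x' y' ≥ -⟪grady f x' y, y' - y⟫ - l * a ^ 2 := by
    have h1 := (abs_le.1 (S14.smooth_y hf hl x' y y')).2
    rw [← ha] at h1
    linarith
  -- dual ascent bound
  have hΔΨ : fhat f (2 * l) xt y' z - fhat f (2 * l) u y z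
      ≥ ⟪grady f xt y, y' - y⟫ - l * a ^ 2 := by
    have h1 : fhat f (2 * l) u y z ≤ fhat f (2 * l) xt y z := hxstar y z xt
    have h2 := (abs_le.1 (S14.smooth_y hf hl xt y y')).1
    rw [← ha] at h2
    have e : fhat f (2 * l) xt y' z - fhat f (2 * l) xt y z = f xt y' - f xt y := by
      simp only [fhat]; ring
    linarith
  -- cross terms
  have hxtu : ‖xt - u‖ ≤ a := by
    have h1 := S14.xstar_lip_y hf hl z y' y xt u (hxstar y' z) (hxstar y z)
    rwa [← ha] at h1
  have hxtx : l * ‖xt - x‖ ≤ l * a + G := by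
    have htri : ‖xt - x‖ ≤ ‖xt - u‖ + ‖u - x‖ := by
      have h1 := norm_add_le (xt - u) (u - x)
      rw [sub_add_sub_cancel] at h1
      exact h1
    have hnrev : ‖u - x‖ = ‖x - u‖ := norm_sub_rev _ _
    have h3 := mul_le_mul_of_nonneg_left htri hl.le
    have h4 := mul_le_mul_of_nonneg_left hxtu hl.le
    calc l * ‖xt - x‖ ≤ l * (‖xt - u‖ + ‖u - x‖) := h3
      _ = l * ‖xt - u‖ + l * ‖u - x‖ := by ring
      _ ≤ l * a + G := by rw [hnrev]; linarith
  have hcross1 : |⟪grady f xt y - grady f x y, y' - y⟫| ≤ (l * a + G) * a := by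
    have h1 := abs_real_inner_le_norm (grady f xt y - grady f x y) (y' - y)
    have h2 := S14.lipy_x hf hl xt x y
    rw [← ha] at h1
    calc |⟪grady f xt y - grady f x y, y' - y⟫|
        ≤ ‖grady f xt y - grady f x y‖ * a := h1
      _ ≤ (l * a + G) * a := by
          apply mul_le_mul_of_nonneg_right _ ha0
          calc ‖grady f xt y - grady f x y‖ ≤ l * ‖xt - x‖ := h2
            _ ≤ l * a + G := hxtx
  have hcross2 : |⟪grady f x' y - grady f x y, y' - y⟫| ≤ G * a := by
    have h1 := abs_real_inner_le_norm (grady f x' y - grady f x y) (y' - y)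
    have h2 := S14.lipy_x hf hl x' x y
    rw [← ha] at h1
    rw [hnxx'] at h2
    calc |⟪grady f x' y - grady f x y, y' - y⟫|
        ≤ ‖grady f x' y - grady f x y‖ * a := h1
      _ ≤ G * a := by
          apply mul_le_mul_of_nonneg_right _ ha0
          calc ‖grady f x' y - grady f x y‖ ≤ l * (ηx * G) := h2
            _ ≤ G := by
                have h5 := mul_le_mul_of_nonneg_right hlηx hG0
                have h6 : l * (ηx * G) = l * ηx * G := by ring
                linarith
  -- F2 : T + 2ΔΨ
  have F2 : (f x' y - f x' y')
        + 2 * (fhat f (2 * l) xt y' z - fhat f (2 * l) u y z)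
      ≥ c - 5 * l * a ^ 2 - 3 * G * a := by
    have e1 : ⟪grady f xt y, y' - y⟫ = c + ⟪grady f xt y - grady f x y, y' - y⟫ := by
      rw [hcdef, ← inner_add_left]
      congr 1
      abel
    have e2 : ⟪grady f x' y, y' - y⟫ = c + ⟪grady f x' y - grady f x y, y' - y⟫ := by
      rw [hcdef, ← inner_add_left]
      congr 1
      abel
    have hc1 := (abs_le.1 hcross1).1
    have hc2 := (abs_le.1 hcross2).2
    linarith [hT, hΔΨ, e1, e2]
  -- triangle helper
  have tri : ∀ p1 p2 p3 : EuclideanSpace ℝ (Fin d1), ‖p1 - p3‖ ≤ ‖p1 - p2‖ + ‖p2 - p3‖ := by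
    intro p1 p2 p3
    have h1 := norm_add_le (p1 - p2) (p2 - p3)
    rwa [sub_add_sub_cancel] at h1
  -- F4 : z-shrink term
  have hxz' : x' - z' = (1 - β) • w := by
    rw [hz', hw]
    module
  have he0 : ‖x' - z‖ ^ 2 = W ^ 2 := by rw [hWdef, hw]
  have F4 : fhat f (2 * l) x' y' z - fhat f (2 * l) x' y' z'
      = l * (2 * β - β ^ 2) * W ^ 2 := by
    have e1 : ‖x' - z'‖ ^ 2 = (1 - β) ^ 2 * W ^ 2 := by
      rw [hxz', norm_smul, Real.norm_eq_abs, mul_pow, sq_abs, hWdef]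
    simp only [fhat]
    rw [e1, he0]
    ring
  -- F5a
  have hexpand : ∀ v : EuclideanSpace ℝ (Fin d1),
      ‖v - β • w‖ ^ 2 = ‖v‖ ^ 2 - 2 * β * ⟪v, w⟫ + β ^ 2 * W ^ 2 := by
    intro v
    rw [norm_sub_sq_real, real_inner_smul_right, norm_smul, Real.norm_eq_abs,
      abs_of_pos hβ, mul_pow, ← hWdef]
    ring
  have hqz' : fhat f (2 * l) q y' z' - fhat f (2 * l) q y' z
      = -(2 * l * β * ⟪q - z, w⟫) + l * β ^ 2 * W ^ 2 := by
    have e1 : q - z' = (q - z) - β • w := by rw [hz']; abel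
    simp only [fhat]
    rw [e1, hexpand (q - z)]
    ring
  have F5a : 2 * (fhat f (2 * l) q y' z' - fhat f (2 * l) xt y' z)
      ≥ -(4 * l * β * ⟪q - z, w⟫) + 2 * l * β ^ 2 * W ^ 2 := by
    have h1 : fhat f (2 * l) xt y' z ≤ fhat f (2 * l) q y' z := hxstar y' z q
    linarith [hqz']
  -- F5b
  have hrz : fhat f (2 * l) rr (yhat z') z - fhat f (2 * l) rr (yhat z') z'
      = 2 * l * β * ⟪rr - z, w⟫ - l * β ^ 2 * W ^ 2 := by
    have e1 : rr - z' = (rr - z) - β • w := by rw [hz']; abel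
    simp only [fhat]
    rw [e1, hexpand (rr - z)]
    ring
  have F5b : 2 * (P z - P z') ≥ 4 * l * β * ⟪rr - z, w⟫ - 2 * l * β ^ 2 * W ^ 2 := by
    have h1 : fhat f (2 * l) rr (yhat z') z ≤ P z := hPub z (yhat z') (hyhatY z')
    have h2 : P z' ≤ fhat f (2 * l) rr (yhat z') z' := by
      rw [← hyhat z']
      exact hxstar (yhat z') z' rr
    linarith [hrz]
  have hinnerrq : ⟪rr - z, w⟫ - ⟪q - z, w⟫ = ⟪rr - q, w⟫ := by
    rw [← inner_sub_left]
    congr 1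
    abel
  have F5 : 2 * (fhat f (2 * l) q y' z' - fhat f (2 * l) xt y' z) + 2 * (P z - P z')
      ≥ 4 * l * β * ⟪rr - q, w⟫ := by
    have e : 4 * l * β * ⟪rr - q, w⟫
        = 4 * l * β * ⟪rr - z, w⟫ - 4 * l * β * ⟪q - z, w⟫ := by
      rw [← hinnerrq]; ring
    linarith [F5a, F5b]
  -- chain bound on ‖rr - q‖
  have hzz' : ‖z - z'‖ = β * W := by
    have e : z - z' = -(β • w) := by rw [hz']; abel
    rw [e, norm_neg, norm_smul, Real.norm_eq_abs, abs_of_pos hβ, hWdef]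
  have hz'z : ‖z' - z‖ = β * W := by rw [norm_sub_rev]; exact hzz'
  have hch1 : ‖rr - xstarz z'‖ ≤ 2 * (β * W) := by
    have h1 := S14.xstar_lip_z hf hl (yhat z') z z' rr (xstar (yhat z') z')
      (hxstar (yhat z') z) (hxstar (yhat z') z')
    rw [hxyhat z', hzz'] at h1
    exact h1
  have hch2 : ‖xstarz z' - xstarz z‖ ≤ 4 * (β * W) := by
    have h1 := S14.xstarz_lip hf hl Y Φ hΦ xstarz hxstarz z' z
    rw [hz'z] at h1
    exact h1
  have hch4 : ‖xstar yp z - xt‖ ≤ ηy * G := by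
    have h1 := S14.xstar_lip_y hf hl z yp y' (xstar yp z) xt (hxstar yp z) (hxstar y' z)
    calc ‖xstar yp z - xt‖ ≤ ‖yp - y'‖ := h1
      _ ≤ ηy * G := hypy'
  have hch5 : ‖xt - q‖ ≤ 2 * (β * W) := by
    have h1 := S14.xstar_lip_z hf hl y' z z' xt q (hxstar y' z) (hxstar y' z')
    rw [hzz'] at h1
    exact h1
  have hrq : ‖rr - q‖ ≤ 8 * β * W + Eb + ηy * G := by
    calc ‖rr - q‖ ≤ ‖rr - xstarz z'‖ + ‖xstarz z' - q‖ := tri _ _ _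
      _ ≤ ‖rr - xstarz z'‖ + (‖xstarz z' - xstarz z‖ + ‖xstarz z - q‖) := by
          linarith [tri (xstarz z') (xstarz z) q]
      _ ≤ ‖rr - xstarz z'‖ + (‖xstarz z' - xstarz z‖
            + (‖xstarz z - xstar yp z‖ + (‖xstar yp z - xt‖ + ‖xt - q‖))) := by
          linarith [tri (xstarz z) (xstar yp z) q, tri (xstar yp z) xt q]
      _ ≤ 2 * (β * W) + (4 * (β * W) + (Eb + (ηy * G + 2 * (β * W)))) := by
          rw [← hEb]
          linarith [hch1, hch2, hch4, hch5]
      _ = 8 * β * W + Eb + ηy * G := by ring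
  have hF5c : 4 * l * β * ⟪rr - q, w⟫ ≥ -(4 * l * β * ((8 * β * W + Eb + ηy * G) * W)) := by
    have h1 := (abs_le.1 (abs_real_inner_le_norm (rr - q) w)).1
    rw [← hWdef] at h1
    have h2 : ‖rr - q‖ * W ≤ (8 * β * W + Eb + ηy * G) * W :=
      mul_le_mul_of_nonneg_right hrq hW0
    have h4 : -((8 * β * W + Eb + ηy * G) * W) ≤ ⟪rr - q, w⟫ := by linarith
    have h5 := mul_le_mul_of_nonneg_left h4 (by positivity : (0:ℝ) ≤ 4 * l * β)
    linarith [h5]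
  -- X vs W
  have hXW : X ≤ W + ηx * G := by
    have e : x - z = w + ηx • g := by rw [hw, hx']; abel
    rw [hX, e]
    calc ‖w + ηx • g‖ ≤ ‖w‖ + ‖ηx • g‖ := norm_add_le _ _
      _ = W + ηx * G := by
          rw [norm_smul, Real.norm_eq_abs, abs_of_pos hηx, ← hWdef, ← hG]
  -- squares
  have hb2 : b ^ 2 ≤ 2 * a ^ 2 + 2 * ηy ^ 2 * G ^ 2 := by
    have h1 := mul_self_le_mul_self hb0 hbb
    have h2 := sq_nonneg (a - ηy * G)
    have h3 : b * b = b ^ 2 := by ring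
    linarith [h1, h2]
  have hX2 : X ^ 2 ≤ 2 * W ^ 2 + 2 * ηx ^ 2 * G ^ 2 := by
    have h1 := mul_self_le_mul_self hX0 hXW
    have h2 := sq_nonneg (W - ηx * G)
    linarith [h1, h2]
  -- S1
  have S1 : ηx * G ^ 2 - 2 * l * ηx ^ 2 * G ^ 2
      ≥ ηx / 64 * G ^ 2 + ηx / 4 * G ^ 2 + ηx / 16 * G ^ 2 := by
    have h1 : l * ηx * (ηx * G ^ 2) ≤ 1 / 1000 * (ηx * G ^ 2) :=
      mul_le_mul_of_nonneg_right hlηx (by positivity)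
    have h2 : (0:ℝ) ≤ ηx * G ^ 2 := by positivity
    linarith [h1, h2]
  -- S2
  have S2 : c - 5 * l * a ^ 2 - 3 * G * a ≥ 1 / (64 * ηy) * b ^ 2 - ηx / 4 * G ^ 2 := by
    apply S2aux l ηx ηy c a b G hηx hηy hlηx
    · rw [← hηy]; exact hc
    · exact mul_le_mul_of_nonneg_right hlηx (sq_nonneg a)
    · rw [← hηy]; exact hb2
  -- S3
  have S3 : l * (2 * β - β ^ 2) * W ^ 2 - 4 * l * β * ((8 * β * W + Eb + ηy * G) * W)
      ≥ 2 * l * β / 16 * X ^ 2 - 96 * l * β * Eb ^ 2 - ηx / 16 * G ^ 2 :=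
    S3aux l ηx ηy β G W X Eb hl hηx hβ hηy hβ1 hlηx hlηy hG0 hW0 hE0 hX2
  -- decomposition of the potential difference
  have hdecomp : (fhat f (2 * l) x y z - 2 * fhat f (2 * l) u y z + 2 * P z)
        - (fhat f (2 * l) x' y' z' - 2 * fhat f (2 * l) q y' z' + 2 * P z')
      = (fhat f (2 * l) x y z - fhat f (2 * l) x' y z)
        + (f x' y - f x' y')
        + (fhat f (2 * l) x' y' z - fhat f (2 * l) x' y' z')
        + ((f x' y - f x' y')
            + 2 * (fhat f (2 * l) xt y' z - fhat f (2 * l) u y z))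
        - (f x' y - f x' y')
        + (2 * (fhat f (2 * l) q y' z' - fhat f (2 * l) xt y' z) + 2 * (P z - P z')) := by
    have eT : fhat f (2 * l) x' y z - fhat f (2 * l) x' y' z = f x' y - f x' y' := by
      simp only [fhat]; ring
    linarith [eT]
  rw [ge_iff_le]
  calc ηx / 64 * G ^ 2 + 1 / (64 * ηy) * b ^ 2 + 2 * l * β / 16 * X ^ 2
        - 48 * (2 * l) * β * Eb ^ 2
      ≤ (ηx * G ^ 2 - 2 * l * ηx ^ 2 * G ^ 2)
        + (c - 5 * l * a ^ 2 - 3 * G * a)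
        + (l * (2 * β - β ^ 2) * W ^ 2
            - 4 * l * β * ((8 * β * W + Eb + ηy * G) * W)) := by
        linarith [S1, S2, S3]
    _ ≤ (fhat f (2 * l) x y z - 2 * fhat f (2 * l) u y z + 2 * P z)
        - (fhat f (2 * l) x' y' z' - 2 * fhat f (2 * l) q y' z' + 2 * P z') := by
        rw [hdecomp]
        linarith [F1, F2, F4, F5, hF5c]
end
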